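/- arXiv:2005.06354 — 3 statements merged into one kernel-verified Lean document; each statement's English description precedes it below -/
import Mathlib

section
/- Let n,k ≥ 1, let m = (m_1,…,m_k) be an array of nonnegative integers, and let τ be a permutation of {1,…,k}. Set m' = (m_{τ(1)},…,m_{τ(k)}). Then there exists a bijection from A_n^k(m) to A_n^k(m'), a ↦ b, such that DEZ(a) = DEZ(b) and Der(a) = Der(b). -/
open scoped Classical

namespace KArr

/-- Positive reduction of a word over ℤ: each positive letter is replaced by its
rank among the distinct positive letters of the word; negative letters unchanged. -/
def posReduce (w : List ℤ) : List ℤ :=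
  w.map fun x => if 0 < x then ((w.toFinset.filter fun y => 0 < y ∧ y ≤ x).card : ℤ) else x

/-- The set of descents of a word (1-indexed: `i` is a descent iff `w_i > w_{i+1}`). -/
def desSet (w : List ℤ) : Finset ℕ :=
  (Finset.range w.length).filter fun i => 1 ≤ i ∧ w.getD i 0 < w.getD (i - 1) 0

/-- The number of descents of a word. -/
def desNum (w : List ℤ) : ℕ := (desSet w).card

/-- The subword of positive letters. -/
def posPart (w : List ℤ) : List ℤ := w.filter fun x => decide (0 < x)

/-- A `k`-arrangement of `[n]`: a permutation together with a color in `Fin k`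
attached to each fixed point (encoded as a total coloring that is `0` off the
fixed points). -/
abbrev Arrangement (n k : ℕ) :=
  {x : Equiv.Perm (Fin n) × (Fin n → Fin k) // ∀ j, x.1 j ≠ j → (x.2 j : ℕ) = 0}

/-- The derangement form of a `k`-arrangement: replace each fixed point by the
negative letter recording its color, then positively reduce.  (Color `c : Fin k`
encodes the letter `¬(c+1) = -(c+1)`.) -/
def dfWord {n k : ℕ} (a : Arrangement n k) : List ℤ :=
  posReduce <| (List.finRange n).map fun i =>
    if a.1.1 i = i then -(((a.1.2 i : ℕ) : ℤ) + 1) else ((a.1.1 i : ℕ) : ℤ) + 1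

/-- The permutation form of a `k`-arrangement: replace each fixed point whose
color is not `¬k` by the corresponding negative letter, then positively reduce. -/
def pfWord {n k : ℕ} (a : Arrangement n k) : List ℤ :=
  posReduce <| (List.finRange n).map fun i =>
    if a.1.1 i = i ∧ (a.1.2 i : ℕ) + 1 ≠ k then -(((a.1.2 i : ℕ) : ℤ) + 1)
    else ((a.1.1 i : ℕ) : ℤ) + 1

/-- `fix_i(a)`: the number of fixed points of the base permutation with color `c`. -/
noncomputable def fixCount {n k : ℕ} (a : Arrangement n k) (c : Fin k) : ℕ :=
  Nat.card {i : Fin n // a.1.1 i = i ∧ a.1.2 i = c}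

/-- `DEZ(a)`, the descent set of the derangement form. -/
def DEZset {n k : ℕ} (a : Arrangement n k) : Finset ℕ := desSet (dfWord a)

/-- `DES(a)`, the descent set of the permutation form. -/
def DESset {n k : ℕ} (a : Arrangement n k) : Finset ℕ := desSet (pfWord a)

/-- `dez(a)`, the number of descents of the derangement form. -/
def dez {n k : ℕ} (a : Arrangement n k) : ℕ := desNum (dfWord a)

/-- `des(a)`, the number of descents of the permutation form. -/
def des {n k : ℕ} (a : Arrangement n k) : ℕ := desNum (pfWord a)

/-- `Der(a)`, the derangement part: the positive subword of the derangement form. -/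
def Der {n k : ℕ} (a : Arrangement n k) : List ℤ := posPart (dfWord a)

/-- One-line notation of a permutation of `[n]`, as a word over `ℤ` with letters `1,…,n`. -/
def oneLine {n : ℕ} (π : Equiv.Perm (Fin n)) : List ℤ :=
  (List.finRange n).map fun i => ((π i : ℕ) : ℤ) + 1

/-- A word `w` contains the pattern `p` if some subsequence of `w` of the same
length as `p` is order-isomorphic to `p` (entrywise strict inequalities match). -/
def Contains (w p : List ℤ) : Prop :=
  ∃ s : List ℤ, s.Sublist w ∧ s.length = p.length ∧
    ∀ i j, i < p.length → j < p.length →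
      (s.getD i 0 < s.getD j 0 ↔ p.getD i 0 < p.getD j 0)

/-- A word avoids a pattern if it does not contain it. -/
def Avoids (w p : List ℤ) : Prop := ¬ Contains w p


/-- `dez`-word of a permutation: replace each fixed point by `¬1 = -1`,
then positively reduce (the `1`-arrangement derangement form). -/
def dzWordPerm {n : ℕ} (π : Equiv.Perm (Fin n)) : List ℤ :=
  posReduce <| (List.finRange n).map fun i =>
    if π i = i then (-1 : ℤ) else ((π i : ℕ) : ℤ) + 1

/-- The weak derangement part `Der_k(a)`: the derangement form with all letters `¬k` removed. -/
def wDer {n k : ℕ} (a : Arrangement n k) : List ℤ :=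
  (dfWord a).filter fun x => decide (x ≠ -(k : ℤ))

/-- For a word `w` which is a derangement form, position `j` (0-indexed) of `w` is an
excedance of the base permutation iff the letter is positive and exceeds the number
of positive letters among the first `j+1` letters. -/
def isExcAt (w : List ℤ) (j : ℕ) : Prop :=
  ((((w.take (j + 1)).filter fun x => decide (0 < x)).length : ℤ)) < w.getD j 0

/-- `e_i = E` for the (1-indexed) letter positions `0 ≤ i ≤ m+1` of `w`, with the
boundary conventions `e_0 = e_{m+1} = E`. -/
def slotE (w : List ℤ) (i : ℕ) : Prop :=
  i = 0 ∨ i = w.length + 1 ∨ isExcAt w (i - 1)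

/-- `w_i > w_{i+1}` (1-indexed letters) with the conventions `w_0 = w_{m+1} = +∞`;
this is the descent condition attached to slot `i`, `0 ≤ i ≤ m`. -/
def slotGt (w : List ℤ) (i : ℕ) : Prop :=
  i = 0 ∨ (i < w.length ∧ w.getD i 0 < w.getD (i - 1) 0)

/-- Slot `i` is of type I: `w_i > w_{i+1}` and `(e_i, e_{i+1}) = (E, N)`. -/
def typeI (w : List ℤ) (i : ℕ) : Prop := slotGt w i ∧ slotE w i ∧ ¬ slotE w (i + 1)

/-- Slot `i` is of type II: `w_i ≤ w_{i+1}` and `(e_i, e_{i+1}) = (N, E)`. -/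
def typeII (w : List ℤ) (i : ℕ) : Prop := ¬ slotGt w i ∧ ¬ slotE w i ∧ slotE w (i + 1)

/-- Slot `i` is of type III: `w_i ≤ w_{i+1}` and `(e_i, e_{i+1}) ≠ (N, E)`. -/
def typeIII (w : List ℤ) (i : ℕ) : Prop := ¬ slotGt w i ∧ ¬ (¬ slotE w i ∧ slotE w (i + 1))

/-- Slot `i` is of type IV: `w_i > w_{i+1}` and `(e_i, e_{i+1}) ≠ (E, N)`. -/
def typeIV (w : List ℤ) (i : ℕ) : Prop := slotGt w i ∧ ¬ (slotE w i ∧ ¬ slotE w (i + 1))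

/-- The length `s_i` of the `i`-th slot of the word `u` (a derangement form),
where the slot letters are the letters equal to `c` (`= ¬k`). -/
def slotLen (u : List ℤ) (c : ℤ) (i : ℕ) : ℕ :=
  let L := (List.range u.length).filter fun j => decide (u.getD j 0 ≠ c)
  (if i < L.length then L.getD i 0 else u.length) - (if i = 0 then 0 else L.getD (i - 1) 0 + 1)

/-- The number of peaks of a word: indices `i` (1-indexed, `2 ≤ i ≤ n-1`)
with `w_{i-1} < w_i > w_{i+1}`. -/
def peakNum (w : List ℤ) : ℕ :=
  ((List.range w.length).filter fun i => decide (0 < i ∧ i + 1 < w.length ∧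
    w.getD (i - 1) 0 < w.getD i 0 ∧ w.getD (i + 1) 0 < w.getD i 0)).length

/-- Number of fixed points of a permutation. -/
noncomputable def fixNum {n : ℕ} (π : Equiv.Perm (Fin n)) : ℕ :=
  Nat.card {i : Fin n // π i = i}

/-- Number of excedances of a permutation. -/
noncomputable def excNum {n : ℕ} (π : Equiv.Perm (Fin n)) : ℕ :=
  Nat.card {i : Fin n // i < π i}

/-- Number of anti-excedances of a permutation. -/
noncomputable def aexcNum {n : ℕ} (π : Equiv.Perm (Fin n)) : ℕ :=
  Nat.card {i : Fin n // π i < i}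

/-- `ldes` of a word: the smallest `i` which is a descent or equals the length
(0 for the empty word). -/
def ldesW (w : List ℤ) : ℕ :=
  (((List.range (w.length + 1)).filter fun i =>
    decide ((1 ≤ i ∧ i < w.length ∧ w.getD i 0 < w.getD (i - 1) 0) ∨ i = w.length))).headD 0

/-- `rdes` of a word: the length minus the position of the rightmost descent
(`sSup ∅ = 0` when there is no descent). -/
def rdesW (w : List ℤ) : ℕ :=
  w.length - ((List.range w.length).filter fun i =>
    decide (1 ≤ i ∧ w.getD i 0 < w.getD (i - 1) 0)).foldr max 0

/-- Number of crossing descents of a permutation: (1-indexed) descents `i` with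
`σ(i) ≥ i+1 ≥ σ(i+1)`. -/
def xdesW (w : List ℤ) : ℕ :=
  ((List.range w.length).filter fun i : ℕ =>
    decide (1 ≤ i ∧ (i : ℤ) + 1 ≤ w.getD (i - 1) 0 ∧ w.getD i 0 ≤ (i : ℤ) + 1)).length

/-- Number of crossing descents of a permutation. -/
def xdesNum {n : ℕ} (σ : Equiv.Perm (Fin n)) : ℕ := xdesW (oneLine σ)

/-- A height sequence `d` encodes a Dyck path: it is weakly increasing and `d_i ≤ i - 1`
(1-indexed), i.e. `d.getD i 0 ≤ i` (0-indexed). -/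
def IsDyck (d : List ℕ) : Prop :=
  List.Pairwise (· ≤ ·) d ∧ ∀ i < d.length, d.getD i 0 ≤ i

/-- Number of hills of a Dyck path: east steps of height equal to their index that
touch the diagonal and are immediately followed by a north step. -/
def hillNum (d : List ℕ) : ℕ :=
  ((List.range d.length).filter fun i => decide (d.getD i 0 = i ∧
    (i + 1 = d.length ∨ d.getD i 0 < d.getD (i + 1) 0))).length

/-- Number of segments of a Dyck path: maximal runs of at least two consecutive
equal heights (counted by their starting index). -/
def segNum (d : List ℕ) : ℕ :=
  ((List.range d.length).filter fun i => decide (i + 1 < d.length ∧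
    d.getD i 0 = d.getD (i + 1) 0 ∧ (i = 0 ∨ d.getD (i - 1) 0 ≠ d.getD i 0))).length

/-- `lseg`: the (1-indexed) position of the last step of the leftmost segment,
or `n+1` if there is no segment. -/
def lsegNum (d : List ℕ) : ℕ :=
  (((List.range (d.length + 2)).filter fun i =>
    decide ((2 ≤ i ∧ i ≤ d.length ∧ d.getD (i - 2) 0 = d.getD (i - 1) 0 ∧
      (i = d.length ∨ d.getD (i - 1) 0 ≠ d.getD i 0)) ∨ i = d.length + 1))).headD 0

/-- Dyck paths of semilength `n`, encoded as monotone functions `Fin n → Fin (n+1)`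
bounded by the diagonal (their height sequences). -/
def DyckFinset (n : ℕ) : Finset (Fin n → Fin (n + 1)) :=
  Finset.univ.filter fun f =>
    (∀ i j : Fin n, i ≤ j → f i ≤ f j) ∧ ∀ i : Fin n, (f i : ℕ) ≤ (i : ℕ)

/-- The height sequence of a function `Fin n → Fin (n+1)` as a list. -/
def hList {n : ℕ} (f : Fin n → Fin (n + 1)) : List ℕ :=
  (List.finRange n).map fun i => (f i : ℕ)




-- ===== auxiliary development =====
lemma desSet_congr {u v : List ℤ} (hlen : u.length = v.length)
    (h : ∀ j, j + 1 < u.length → (u.getD (j+1) 0 < u.getD j 0 ↔ v.getD (j+1) 0 < v.getD j 0)) :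
    desSet u = desSet v := by
  ext i
  simp only [desSet, Finset.mem_filter, Finset.mem_range]
  constructor
  · rintro ⟨hi, h1, hd⟩
    obtain ⟨j, rfl⟩ : ∃ j, i = j + 1 := ⟨i - 1, by omega⟩
    have := (h j (by omega)).mp (by simpa using hd)
    exact ⟨by omega, by omega, by simpa using this⟩
  · rintro ⟨hi, h1, hd⟩
    obtain ⟨j, rfl⟩ : ∃ j, i = j + 1 := ⟨i - 1, by omega⟩
    have := (h j (by omega)).mpr (by simpa using hd)
    exact ⟨by omega, by omega, by simpa using this⟩

/-- the rank function used in posReduce -/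
def rk (w : List ℤ) (x : ℤ) : ℤ :=
  if 0 < x then ((w.toFinset.filter fun y => 0 < y ∧ y ≤ x).card : ℤ) else x

lemma posReduce_eq_map (w : List ℤ) : posReduce w = w.map (rk w) := rfl

lemma rk_pos {w : List ℤ} {x : ℤ} (hx : x ∈ w) (h : 0 < x) : 0 < rk w x := by
  rw [rk, if_pos h]
  have : x ∈ w.toFinset.filter fun y => 0 < y ∧ y ≤ x := by
    simp [List.mem_toFinset.mpr hx, h]
  have := Finset.card_pos.mpr ⟨x, this⟩
  exact_mod_cast this

lemma rk_nonpos {w : List ℤ} {x : ℤ} (h : ¬ 0 < x) : rk w x = x := by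
  rw [rk, if_neg h]

lemma rk_lt_iff {w : List ℤ} {x y : ℤ} (hx : x ∈ w) (hy : y ∈ w) :
    rk w x < rk w y ↔ x < y := by
  rcases lt_or_ge 0 x with hpx | hnx
  · rcases lt_or_ge 0 y with hpy | hny
    · -- both positive: card comparison
      rw [rk, if_pos hpx, rk, if_pos hpy]
      constructor
      · intro hlt
        by_contra hxy
        push_neg at hxy
        have hsub : (w.toFinset.filter fun z => 0 < z ∧ z ≤ y) ⊆
            (w.toFinset.filter fun z => 0 < z ∧ z ≤ x) := by
          intro z hz
          simp only [Finset.mem_filter] at hz ⊢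
          exact ⟨hz.1, hz.2.1, le_trans hz.2.2 hxy⟩
        have := Finset.card_le_card hsub
        exact absurd hlt (by exact_mod_cast Nat.not_lt.mpr this)
      · intro hlt
        have hsub : (w.toFinset.filter fun z => 0 < z ∧ z ≤ x) ⊂
            (w.toFinset.filter fun z => 0 < z ∧ z ≤ y) := by
          constructor
          · intro z hz
            simp only [Finset.mem_filter] at hz ⊢
            exact ⟨hz.1, hz.2.1, le_trans hz.2.2 hlt.le⟩
          · intro hcon
            have : y ∈ (w.toFinset.filter fun z => 0 < z ∧ z ≤ y) := by
              simp [List.mem_toFinset.mpr hy, hpy]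
            have := hcon this
            simp only [Finset.mem_filter] at this
            omega
        have := Finset.card_lt_card hsub
        exact_mod_cast this
    · have h1 : 0 < rk w x := rk_pos hx hpx
      have h2 : rk w y = y := rk_nonpos (by omega)
      constructor <;> intro <;> omega
  · rcases lt_or_ge 0 y with hpy | hny
    · have h1 : rk w x = x := rk_nonpos (by omega)
      have h2 : 0 < rk w y := rk_pos hy hpy
      constructor <;> intro <;> omega
    · rw [rk_nonpos (by omega), rk_nonpos (by omega)]


lemma length_posReduce (w : List ℤ) : (posReduce w).length = w.length := by
  simp [posReduce_eq_map]

lemma getD_posReduce (w : List ℤ) {j : ℕ} (hj : j < w.length) :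
    (posReduce w).getD j 0 = rk w (w.getD j 0) := by
  rw [posReduce_eq_map, List.getD_eq_getElem _ _ (by simpa using hj),
    List.getD_eq_getElem _ _ hj, List.getElem_map]

lemma desSet_posReduce (w : List ℤ) : desSet (posReduce w) = desSet w := by
  apply desSet_congr (by simp [length_posReduce])
  intro j hj
  rw [length_posReduce] at hj
  rw [getD_posReduce w (by omega), getD_posReduce w (by omega)]
  have h1 : w.getD (j+1) 0 ∈ w := by
    rw [List.getD_eq_getElem _ _ (by omega)]; exact List.getElem_mem _
  have h2 : w.getD j 0 ∈ w := by
    rw [List.getD_eq_getElem _ _ (by omega)]; exact List.getElem_mem _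
  exact rk_lt_iff h1 h2

lemma posPart_posReduce (w : List ℤ) :
    posPart (posReduce w) = (w.filter fun x => decide (0 < x)).map (rk w) := by
  rw [posReduce_eq_map, posPart, List.filter_map]
  congr 1
  apply List.filter_congr
  intro x hx
  simp only [Function.comp_apply, decide_eq_decide]
  constructor
  · intro h
    by_contra hc
    rw [rk_nonpos hc] at h; exact hc h
  · intro h; exact rk_pos hx h


section Core
variable (lo : ℤ)

def act (lo : ℤ) (x : ℤ) : Bool := decide (x = lo) || decide (x = lo + 1)

lemma act_true {x : ℤ} : act lo x = true ↔ (x = lo ∨ x = lo + 1) := by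
  simp [act]
lemma act_false {x : ℤ} : act lo x = false ↔ (x ≠ lo ∧ x ≠ lo + 1) := by
  simp [act, not_or]

def unparse : List (ℕ × ℕ) → List ℤ
  | [] => []
  | (a, b) :: bs => (List.replicate a lo ++ List.replicate b (lo+1)) ++ unparse bs

def tfAux : List (ℕ × ℕ) → List (ℕ × ℕ)
  | [] => []
  | [(a, b)] => [(b + 1, a - 1)]
  | (a, b) :: p :: bs => (b, a) :: tfAux (p :: bs)

def tf : List (ℕ × ℕ) → List (ℕ × ℕ)
  | [] => []
  | [(a, b)] => [(b, a)]
  | (a, b) :: p :: bs => (b - 1, a + 1) :: tfAux (p :: bs)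

def VB : Bool → List (ℕ × ℕ) → Prop
  | _, [] => True
  | fl, (a, b) :: bs => (fl = true → 1 ≤ a) ∧ 1 ≤ a + b ∧ (bs = [] ∨ (1 ≤ b ∧ VB true bs))

def blockLens (bs : List (ℕ × ℕ)) : List ℕ := bs.map fun p => p.1 + p.2

@[simp] lemma blockLens_nil : blockLens [] = [] := rfl
@[simp] lemma blockLens_cons (p : ℕ × ℕ) (bs : List (ℕ × ℕ)) :
    blockLens (p :: bs) = (p.1 + p.2) :: blockLens bs := rfl

def Bnd : List ℕ → ℕ → Prop
  | [], _ => False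
  | L :: Ls, m => (Ls ≠ [] ∧ m = L) ∨ (L ≤ m ∧ Bnd Ls (m - L))

lemma mem_unparse {bs : List (ℕ × ℕ)} {x : ℤ} (h : x ∈ unparse lo bs) :
    x = lo ∨ x = lo + 1 := by
  induction bs with
  | nil => simp [unparse] at h
  | cons p bs ih =>
    obtain ⟨a, b⟩ := p
    simp only [unparse, List.mem_append, List.mem_replicate] at h
    rcases h with (⟨_,h⟩|⟨_,h⟩)|h
    · exact Or.inl h
    · exact Or.inr h
    · exact ih h

lemma length_unparse (bs : List (ℕ × ℕ)) :
    (unparse lo bs).length = (blockLens bs).sum := by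
  induction bs with
  | nil => simp [unparse, blockLens]
  | cons p bs ih =>
    obtain ⟨a, b⟩ := p
    simp only [unparse, blockLens_cons, List.length_append, List.length_replicate,
      List.sum_cons, ih]

def sumA (bs : List (ℕ × ℕ)) : ℕ := (bs.map Prod.fst).sum
def sumB (bs : List (ℕ × ℕ)) : ℕ := (bs.map Prod.snd).sum

lemma count_unparse_lo (bs : List (ℕ × ℕ)) :
    (unparse lo bs).count lo = sumA bs := by
  induction bs with
  | nil => simp [unparse, sumA]
  | cons p bs ih =>
    obtain ⟨a, b⟩ := p
    have : lo + 1 ≠ lo := by omega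
    simp [unparse, sumA, List.count_append, ih, List.count_replicate, this, sumA]

lemma count_unparse_hi (bs : List (ℕ × ℕ)) :
    (unparse lo bs).count (lo + 1) = sumB bs := by
  induction bs with
  | nil => simp [unparse, sumB]
  | cons p bs ih =>
    obtain ⟨a, b⟩ := p
    have : lo ≠ lo + 1 := by omega
    simp [unparse, sumB, List.count_append, ih, List.count_replicate, this, sumB]

lemma count_unparse_other (bs : List (ℕ × ℕ)) {z : ℤ} (h1 : z ≠ lo) (h2 : z ≠ lo + 1) :
    (unparse lo bs).count z = 0 := by
  induction bs with
  | nil => simp [unparse]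
  | cons p bs ih =>
    obtain ⟨a, b⟩ := p
    simp [unparse, List.count_append, ih, List.count_replicate, h1.symm, h2.symm]

lemma tfAux_ne_nil {p : ℕ × ℕ} {bs : List (ℕ × ℕ)} : tfAux (p :: bs) ≠ [] := by
  obtain ⟨a, b⟩ := p
  cases bs with
  | nil => simp [tfAux]
  | cons q bs => simp [tfAux]

lemma blockLens_tfAux {bs : List (ℕ × ℕ)} (h : VB true bs) :
    blockLens (tfAux bs) = blockLens bs := by
  induction bs with
  | nil => rfl
  | cons p bs ih =>
    obtain ⟨a, b⟩ := p
    obtain ⟨h1, h2, h3⟩ := h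
    cases bs with
    | nil =>
      have := h1 rfl
      simp only [tfAux, blockLens_cons, blockLens_nil, List.cons.injEq, and_true]
      omega
    | cons q bs =>
      rcases h3 with h3 | ⟨hb, h3⟩
      · exact absurd h3 (by simp)
      simp only [tfAux, blockLens_cons]
      rw [ih h3]
      simp only [blockLens_cons, List.cons.injEq]
      refine ⟨by omega, trivial⟩

lemma blockLens_tf {bs : List (ℕ × ℕ)} (h : VB false bs) :
    blockLens (tf bs) = blockLens bs := by
  cases bs with
  | nil => rfl
  | cons p bs =>
    obtain ⟨a, b⟩ := p
    obtain ⟨h1, h2, h3⟩ := h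
    cases bs with
    | nil =>
      simp only [tf, blockLens_cons, blockLens_nil, List.cons.injEq, and_true]
      omega
    | cons q bs =>
      rcases h3 with h3 | ⟨hb, h3⟩
      · exact absurd h3 (by simp)
      simp only [tf, blockLens_cons]
      rw [blockLens_tfAux h3]
      simp only [blockLens_cons, List.cons.injEq]
      refine ⟨by omega, trivial⟩

lemma vb_tfAux {bs : List (ℕ × ℕ)} (h : VB true bs) : VB true (tfAux bs) := by
  induction bs with
  | nil => trivial
  | cons p bs ih =>
    obtain ⟨a, b⟩ := p
    obtain ⟨h1, h2, h3⟩ := h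
    cases bs with
    | nil =>
      refine ⟨fun _ => by omega, by have := h1 rfl; omega, Or.inl rfl⟩
    | cons q bs =>
      rcases h3 with h3 | ⟨hb, h3⟩
      · exact absurd h3 (by simp)
      exact ⟨fun _ => hb, by omega, Or.inr ⟨h1 rfl, ih h3⟩⟩

lemma vb_tf {bs : List (ℕ × ℕ)} (h : VB false bs) : VB false (tf bs) := by
  cases bs with
  | nil => trivial
  | cons p bs =>
    obtain ⟨a, b⟩ := p
    obtain ⟨h1, h2, h3⟩ := h
    cases bs with
    | nil => exact ⟨by simp, by omega, Or.inl rfl⟩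
    | cons q bs =>
      rcases h3 with h3 | ⟨hb, h3⟩
      · exact absurd h3 (by simp)
      refine ⟨by simp, by omega, Or.inr ⟨by omega, ?_⟩⟩
      · have := vb_tfAux h3
        cases hq : tfAux (q :: bs) with
        | nil => exact absurd hq tfAux_ne_nil
        | cons r cs => rw [hq] at this; exact this

lemma tfAux_tfAux {bs : List (ℕ × ℕ)} (h : VB true bs) : tfAux (tfAux bs) = bs := by
  induction bs with
  | nil => rfl
  | cons p bs ih =>
    obtain ⟨a, b⟩ := p
    obtain ⟨h1, h2, h3⟩ := h
    cases bs with
    | nil =>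
      have := h1 rfl
      simp only [tfAux, List.cons.injEq, Prod.mk.injEq, and_true]
      omega
    | cons q bs =>
      rcases h3 with h3 | ⟨hb, h3⟩
      · exact absurd h3 (by simp)
      have hne := @tfAux_ne_nil q bs
      simp only [tfAux]
      cases hq : tfAux (q :: bs) with
      | nil => exact absurd hq hne
      | cons r cs =>
        simp only [tfAux]
        rw [← hq, ih h3]

lemma tf_tf {bs : List (ℕ × ℕ)} (h : VB false bs) : tf (tf bs) = bs := by
  cases bs with
  | nil => rfl
  | cons p bs =>
    obtain ⟨a, b⟩ := p
    obtain ⟨h1, h2, h3⟩ := h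
    cases bs with
    | nil => simp only [tf]
    | cons q bs =>
      rcases h3 with h3 | ⟨hb, h3⟩
      · exact absurd h3 (by simp)
      have hne := @tfAux_ne_nil q bs
      simp only [tf]
      cases hq : tfAux (q :: bs) with
      | nil => exact absurd hq hne
      | cons r cs =>
        simp only [tf]
        rw [← hq, tfAux_tfAux h3]
        simp only [List.cons.injEq, Prod.mk.injEq, and_true]
        omega

lemma sum_tfAux {bs : List (ℕ × ℕ)} (h : VB true bs) (hne : bs ≠ []) :
    sumA (tfAux bs) = sumB bs + 1 ∧ sumB (tfAux bs) + 1 = sumA bs := by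
  induction bs with
  | nil => exact absurd rfl hne
  | cons p bs ih =>
    obtain ⟨a, b⟩ := p
    obtain ⟨h1, h2, h3⟩ := h
    cases bs with
    | nil =>
      have := h1 rfl
      constructor
      · simp [tfAux, sumA, sumB]
      · simp only [tfAux, sumA, sumB, List.map, List.sum_cons, List.sum_nil]
        omega
    | cons q bs =>
      rcases h3 with h3 | ⟨hb, h3⟩
      · exact absurd h3 (by simp)
      obtain ⟨e1, e2⟩ := ih h3 (by simp)
      constructor
      · simp only [tfAux, sumA, sumB, List.map, List.sum_cons] at e1 ⊢
        omega
      · simp only [tfAux, sumA, sumB, List.map, List.sum_cons] at e2 ⊢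
        omega

lemma sum_tf {bs : List (ℕ × ℕ)} (h : VB false bs) :
    sumA (tf bs) = sumB bs ∧ sumB (tf bs) = sumA bs := by
  cases bs with
  | nil => simp [tf, sumA, sumB]
  | cons p bs =>
    obtain ⟨a, b⟩ := p
    obtain ⟨h1, h2, h3⟩ := h
    cases bs with
    | nil => constructor <;> simp [tf, sumA, sumB]
    | cons q bs =>
      rcases h3 with h3 | ⟨hb, h3⟩
      · exact absurd h3 (by simp)
      obtain ⟨e1, e2⟩ := sum_tfAux h3 (by simp)
      constructor
      · simp only [tf, sumA, sumB, List.map, List.sum_cons] at e1 ⊢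
        omega
      · simp only [tf, sumA, sumB, List.map, List.sum_cons] at e2 ⊢
        omega


lemma length_unparse_cons (a b : ℕ) (bs : List (ℕ × ℕ)) :
    (unparse lo ((a,b) :: bs)).length = a + b + (unparse lo bs).length := by
  simp [unparse]; omega

lemma getD_unparse_lt {a b : ℕ} {bs : List (ℕ × ℕ)} {j : ℕ} (hj : j < a + b) :
    (unparse lo ((a,b) :: bs)).getD j 0 = if j < a then lo else lo + 1 := by
  show ((List.replicate a lo ++ List.replicate b (lo+1)) ++ unparse lo bs).getD j 0 = _
  rw [List.getD_append _ _ _ _ (by simp; omega)]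
  by_cases h : j < a
  · rw [List.getD_append _ _ _ _ (by simpa using h), if_pos h]
    rw [List.getD_eq_getElem _ _ (by simpa using h), List.getElem_replicate]
  · rw [List.getD_append_right _ _ _ _ (by simpa using not_lt.mp h), if_neg h]
    have : j - (List.replicate a lo).length < b := by simp; omega
    rw [List.getD_eq_getElem _ _ (by simpa using this), List.getElem_replicate]

lemma getD_unparse_ge {a b : ℕ} {bs : List (ℕ × ℕ)} {j : ℕ} (hj : a + b ≤ j) :
    (unparse lo ((a,b) :: bs)).getD j 0 = (unparse lo bs).getD (j - (a+b)) 0 := by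
  show ((List.replicate a lo ++ List.replicate b (lo+1)) ++ unparse lo bs).getD j 0 = _
  rw [List.getD_append_right _ _ _ _ (by simp; omega)]
  congr 1
  simp

lemma head_unparse {bs : List (ℕ × ℕ)} (h : VB true bs) (hne : bs ≠ []) :
    (unparse lo bs).getD 0 0 = lo := by
  cases bs with
  | nil => exact absurd rfl hne
  | cons p bs =>
    obtain ⟨a, b⟩ := p
    obtain ⟨h1, h2, _⟩ := h
    have ha := h1 rfl
    rw [getD_unparse_lt lo (by omega), if_pos (by omega)]

lemma unparse_ne_nil {bs : List (ℕ × ℕ)} (h : VB true bs) (hne : bs ≠ []) :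
    unparse lo bs ≠ [] := by
  cases bs with
  | nil => exact absurd rfl hne
  | cons p bs =>
    obtain ⟨a, b⟩ := p
    obtain ⟨h1, h2, _⟩ := h
    have : (unparse lo ((a,b) :: bs)).length > 0 := by
      rw [length_unparse_cons]; omega
    exact List.ne_nil_of_length_pos this

lemma desc_unparse {bs : List (ℕ × ℕ)} {fl : Bool} (h : VB fl bs) :
    ∀ j, j + 1 < (unparse lo bs).length →
    ((unparse lo bs).getD (j+1) 0 < (unparse lo bs).getD j 0 ↔ Bnd (blockLens bs) (j+1)) := by
  induction bs generalizing fl with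
  | nil => intro j hj; simp [unparse] at hj
  | cons p bs ih =>
    obtain ⟨a, b⟩ := p
    obtain ⟨h1, h2, h3⟩ := h
    intro j hj
    rw [length_unparse_cons] at hj
    rcases lt_trichotomy (j+1) (a+b) with hc | hc | hc
    · apply iff_of_false
      · rw [getD_unparse_lt lo hc, getD_unparse_lt lo (by omega)]
        split_ifs <;> omega
      · simp only [blockLens_cons, Bnd]
        push_neg
        exact ⟨fun _ => by omega, fun h => absurd h (by omega)⟩
    · -- boundary
      have hbs : bs ≠ [] := by
        intro hn; subst hn; simp [unparse] at hj; omega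
      rcases h3 with h3 | ⟨hb, h3⟩
      · exact absurd h3 hbs
      apply iff_of_true
      · rw [getD_unparse_lt lo (show j < a + b by omega),
          if_neg (by omega), getD_unparse_ge lo (by omega), hc, Nat.sub_self,
          head_unparse lo h3 hbs]
        omega
      · simp only [blockLens_cons, Bnd]
        left
        refine ⟨?_, hc⟩
        cases bs with
        | nil => exact absurd rfl hbs
        | cons q cs => simp
    · -- beyond
      have hbs : bs ≠ [] := by
        intro hn; subst hn; simp [unparse] at hj; omega
      rcases h3 with h3 | ⟨hb, h3⟩
      · exact absurd h3 hbs
      obtain ⟨j', rfl⟩ : ∃ j', j = (a+b) + j' := ⟨j - (a+b), by omega⟩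
      rw [getD_unparse_ge lo (by omega), getD_unparse_ge lo (by omega)]
      have e1 : a + b + j' + 1 - (a+b) = j' + 1 := by omega
      have e2 : a + b + j' - (a+b) = j' := by omega
      rw [e1, e2]
      have := ih h3 j' (by omega)
      rw [this]
      simp only [blockLens_cons, Bnd]
      constructor
      · intro hb'
        right
        refine ⟨by omega, ?_⟩
        rw [e1]
        exact hb'
      · rintro (⟨_, hE⟩ | ⟨_, hB⟩)
        · omega
        · rw [e1] at hB
          exact hB


lemma takeWhile_all {α : Type*} {p : α → Bool} :
    ∀ {l : List α}, (∀ x ∈ l, p x = true) → l.takeWhile p = l := by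
  intro l
  induction l with
  | nil => intro; rfl
  | cons x xs ih =>
    intro h
    rw [List.takeWhile_cons_of_pos (h x (by simp))]
    rw [ih fun y hy => h y (by simp [hy])]

lemma dropWhile_head_false {α : Type*} {p : α → Bool} :
    ∀ {l : List α} {z : α} {s' : List α}, l.dropWhile p = z :: s' → p z = false := by
  intro l
  induction l with
  | nil => intro z s' h; simp at h
  | cons x xs ih =>
    intro z s' h
    by_cases hx : p x
    · rw [List.dropWhile_cons_of_pos hx] at h
      exact ih h
    · rw [List.dropWhile_cons_of_neg hx] at h
      cases h
      exact Bool.eq_false_iff.mpr hx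

lemma exists_parse : ∀ (N : ℕ) (r : List ℤ), r.length ≤ N →
    (∀ x ∈ r, x = lo ∨ x = lo + 1) → ∀ fl : Bool,
    (fl = true → r = [] ∨ r.getD 0 0 = lo) →
    ∃ bs, VB fl bs ∧ unparse lo bs = r := by
  intro N
  induction N with
  | zero =>
    intro r hr _ fl _
    have : r = [] := List.eq_nil_of_length_eq_zero (by omega)
    subst this
    exact ⟨[], trivial, rfl⟩
  | succ N ih =>
    intro r hrN hact fl hfl
    cases hr : r with
    | nil => exact ⟨[], trivial, rfl⟩
    | cons x xs =>
      subst hr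
      set p : ℤ → Bool := fun y => decide (y = lo) with hp
      set q : ℤ → Bool := fun y => decide (y = lo + 1) with hq
      set s := (x :: xs).dropWhile p with hs
      set t := s.dropWhile q with ht
      set a := ((x :: xs).takeWhile p).length with ha
      set b := (s.takeWhile q).length with hb
      have h1 : (x :: xs) = List.replicate a lo ++ s := by
        conv_lhs => rw [← List.takeWhile_append_dropWhile (p := p) (l := x :: xs)]
        congr 1
        have hmem : ∀ y ∈ (x :: xs).takeWhile p, y = lo := fun y hy => by
          have := List.mem_takeWhile_imp hy
          simpa [hp] using this
        exact List.eq_replicate_of_mem hmem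
      have hs_act : ∀ y ∈ s, y = lo ∨ y = lo + 1 := fun y hy =>
        hact y ((List.dropWhile_sublist p).subset hy)
      have h2 : s = List.replicate b (lo+1) ++ t := by
        conv_lhs => rw [← List.takeWhile_append_dropWhile (p := q) (l := s)]
        congr 1
        have hmem : ∀ y ∈ s.takeWhile q, y = lo + 1 := fun y hy => by
          have := List.mem_takeWhile_imp hy
          simpa [hq] using this
        exact List.eq_replicate_of_mem hmem
      have ht_act : ∀ y ∈ t, y = lo ∨ y = lo + 1 := fun y hy =>
        hs_act y ((List.dropWhile_sublist q).subset hy)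
      -- head of s is not lo
      have hshead : ∀ z s', s = z :: s' → z ≠ lo := by
        intro z s' hzs hzlo
        have := dropWhile_head_false (p := p) (l := x :: xs) (by rw [← hs]; exact hzs)
        simp [hp, hzlo] at this
      have hthead : ∀ z t', t = z :: t' → z = lo := by
        intro z t' hzt
        have := dropWhile_head_false (p := q) (l := s) (by rw [← ht]; exact hzt)
        simp only [hq, decide_eq_false_iff_not] at this
        rcases ht_act z (by simp [hzt]) with h | h
        · exact h
        · exact absurd h this
      have hab : 1 ≤ a + b := by
        by_cases hxl : x = lo
        · have : (x :: xs).takeWhile p = x :: xs.takeWhile p :=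
            List.takeWhile_cons_of_pos (by simp [hp, hxl])
          have := congrArg List.length this
          rw [← ha] at this
          simp at this
          omega
        · have hsx : s = x :: xs := by
            rw [hs]
            exact List.dropWhile_cons_of_neg (by simp [hp, hxl])
          have hxh : x = lo + 1 := by
            rcases hact x (by simp) with h | h
            · exact absurd h hxl
            · exact h
          have : s.takeWhile q = x :: xs.takeWhile q := by
            rw [hsx]
            exact List.takeWhile_cons_of_pos (by simp [hq, hxh])
          have := congrArg List.length this
          rw [← hb] at this
          simp at this
          omega
      have hlens : s.length = b + t.length := by
        conv_lhs => rw [h2]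
        simp
      have hlenr : (x :: xs).length = a + s.length := by
        conv_lhs => rw [h1]
        simp
      have htN : t.length ≤ N := by
        have := hrN
        simp only [List.length_cons] at this
        omega
      obtain ⟨bs', hvb', hup'⟩ := ih t htN ht_act true (by
        intro _
        cases htt : t with
        | nil => exact Or.inl rfl
        | cons z t' => exact Or.inr (by rw [List.getD_cons_zero]; exact hthead z t' htt))
      refine ⟨(a, b) :: bs', ⟨?_, hab, ?_⟩, ?_⟩
      · intro hfl'
        rcases hfl hfl' with h | h
        · simp at h
        · rw [List.getD_cons_zero] at h
          have : (x :: xs).takeWhile p = x :: xs.takeWhile p :=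
            List.takeWhile_cons_of_pos (by simp [hp, h])
          have := congrArg List.length this
          rw [← ha] at this
          simp at this
          omega
      · cases hbs' : bs' with
        | nil => exact Or.inl rfl
        | cons pp cs =>
          refine Or.inr ⟨?_, by rw [← hbs']; exact hvb'⟩
          -- b ≥ 1 : t ≠ [] and if b = 0 then s = t has head lo, contradiction
          have htne : t ≠ [] := by
            rw [← hup']
            exact unparse_ne_nil lo hvb' (by simp [hbs'])
          by_contra hb0
          push_neg at hb0
          interval_cases b
          · rw [List.replicate_zero, List.nil_append] at h2
            cases htt : t with
            | nil => exact htne htt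
            | cons z t' =>
              have hzlo := hthead z t' htt
              have := hshead z t' (by rw [h2, htt])
              exact this hzlo
      · show unparse lo ((a, b) :: bs') = x :: xs
        simp only [unparse, hup']
        rw [List.append_assoc, ← h2, ← h1]

lemma lead_lo {a b : ℕ} {bs : List (ℕ × ℕ)} {fl : Bool} (h : VB fl ((a,b) :: bs)) :
    (unparse lo ((a,b) :: bs)).takeWhile (fun y => decide (y = lo)) = List.replicate a lo := by
  obtain ⟨h1, h2, h3⟩ := h
  show ((List.replicate a lo ++ List.replicate b (lo+1)) ++ unparse lo bs).takeWhile _ = _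
  rw [List.append_assoc, List.takeWhile_append]
  rw [if_pos (by rw [takeWhile_all (by simp)])]
  have hne : ¬ ((lo + 1 : ℤ) = lo) := by omega
  have h0 : (List.replicate b (lo+1)).takeWhile (fun y => decide (y = lo)) = [] := by
    simp [List.takeWhile_replicate, hne]
  have hrest : (List.replicate b (lo+1) ++ unparse lo bs).takeWhile
      (fun y => decide (y = lo)) = [] := by
    rcases h3 with h3 | ⟨hb, h3⟩
    · subst h3
      show (List.replicate b (lo+1) ++ unparse lo []).takeWhile _ = []
      rw [show unparse lo [] = [] from rfl, List.append_nil, h0]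
    · rw [List.takeWhile_append, if_neg (by rw [h0]; simp; omega), h0]
  rw [hrest, List.append_nil]


lemma lead_hi {b : ℕ} {bs : List (ℕ × ℕ)} (h3 : bs = [] ∨ (1 ≤ b ∧ VB true bs)) :
    (List.replicate b (lo+1) ++ unparse lo bs).takeWhile (fun y => decide (y = lo+1)) =
      List.replicate b (lo+1) := by
  rw [List.takeWhile_append, if_pos (by rw [takeWhile_all (by simp)])]
  have hrest : (unparse lo bs).takeWhile (fun y => decide (y = lo+1)) = [] := by
    rcases h3 with h3 | ⟨hb, h3⟩
    · subst h3; rfl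
    · cases hbs : bs with
      | nil => rfl
      | cons q cs =>
        rw [← hbs]
        cases hu : unparse lo bs with
        | nil => rfl
        | cons z u =>
          have hz : z = lo := by
            have := head_unparse lo h3 (by rw [hbs]; simp)
            rw [hu] at this
            simpa using this
          apply List.takeWhile_cons_of_neg
          simp [hz]
  rw [hrest, List.append_nil]

lemma unparse_injective : ∀ (bs cs : List (ℕ × ℕ)) (fl : Bool), VB fl bs → VB fl cs →
    unparse lo bs = unparse lo cs → bs = cs := by
  intro bs
  induction bs with
  | nil =>
    intro cs fl _ hc he
    cases cs with
    | nil => rfl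
    | cons p cs =>
      obtain ⟨a, b⟩ := p
      obtain ⟨_, h2, _⟩ := hc
      have := congrArg List.length he
      rw [length_unparse_cons] at this
      simp [unparse] at this
      omega
  | cons p bs ih =>
    intro cs fl hb hc he
    obtain ⟨a, b⟩ := p
    cases cs with
    | nil =>
      obtain ⟨_, h2, _⟩ := hb
      have := congrArg List.length he
      rw [length_unparse_cons] at this
      simp [unparse] at this
      omega
    | cons p' cs =>
      obtain ⟨a', b'⟩ := p'
      have hl1 := lead_lo lo hb
      have hl2 := lead_lo lo hc
      rw [he, hl2] at hl1
      have haa : a' = a := by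
        have := congrArg List.length hl1
        simpa using this
      subst haa
      have he2 : List.replicate b (lo+1) ++ unparse lo bs =
          List.replicate b' (lo+1) ++ unparse lo cs := by
        apply List.append_cancel_left (as := List.replicate a' lo)
        have e1 : unparse lo ((a', b) :: bs) =
            List.replicate a' lo ++ (List.replicate b (lo+1) ++ unparse lo bs) := by
          simp [unparse]
        have e2 : unparse lo ((a', b') :: cs) =
            List.replicate a' lo ++ (List.replicate b' (lo+1) ++ unparse lo cs) := by
          simp [unparse]
        rw [← e1, ← e2, he]
      obtain ⟨hb1, hb2, hb3⟩ := hb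
      obtain ⟨hc1, hc2, hc3⟩ := hc
      have hh1 := lead_hi lo (b := b) (bs := bs) (by tauto)
      have hh2 := lead_hi lo (b := b') (bs := cs) (by tauto)
      rw [he2, hh2] at hh1
      have hbb : b' = b := by
        have := congrArg List.length hh1
        simpa using this
      subst hbb
      have he3 : unparse lo bs = unparse lo cs := List.append_cancel_left he2
      cases hbs : bs with
      | nil =>
        cases hcs : cs with
        | nil => rfl
        | cons q ds =>
          subst hbs hcs
          rcases hc3 with h | ⟨_, h⟩
          · simp at h
          · have := unparse_ne_nil lo h (by simp)
            rw [← he3] at this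
            simp [unparse] at this
      | cons q ds =>
        cases hcs : cs with
        | nil =>
          subst hbs hcs
          rcases hb3 with h | ⟨_, h⟩
          · simp at h
          · have := unparse_ne_nil lo h (by simp)
            rw [he3] at this
            simp [unparse] at this
        | cons q' ds' =>
          subst hbs hcs
          rcases hb3 with h | ⟨_, hvbs⟩; · simp at h
          rcases hc3 with h | ⟨_, hvcs⟩; · simp at h
          rw [ih (q' :: ds') true hvbs hvcs he3]


noncomputable def parseOf (r : List ℤ) : List (ℕ × ℕ) :=
  if h : ∃ bs, VB false bs ∧ unparse lo bs = r then h.choose else []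

lemma parseOf_spec {r : List ℤ} (hact : ∀ x ∈ r, x = lo ∨ x = lo + 1) :
    VB false (parseOf lo r) ∧ unparse lo (parseOf lo r) = r := by
  have hex : ∃ bs, VB false bs ∧ unparse lo bs = r :=
    exists_parse lo r.length r le_rfl hact false (by simp)
  rw [parseOf, dif_pos hex]
  exact hex.choose_spec

noncomputable def Tw (r : List ℤ) : List ℤ := unparse lo (tf (parseOf lo r))

section RunLemmas
variable {r : List ℤ}

lemma Tw_length (hr : ∀ x ∈ r, x = lo ∨ x = lo + 1) : (Tw lo r).length = r.length := by
  obtain ⟨h1, h2⟩ := parseOf_spec lo hr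
  rw [Tw, length_unparse, blockLens_tf h1, ← length_unparse, h2]

lemma Tw_mem {x : ℤ} (hx : x ∈ Tw lo r) : x = lo ∨ x = lo + 1 := mem_unparse lo hx

lemma Tw_desc (hr : ∀ x ∈ r, x = lo ∨ x = lo + 1) : ∀ j, j + 1 < r.length →
    ((Tw lo r).getD (j+1) 0 < (Tw lo r).getD j 0 ↔ r.getD (j+1) 0 < r.getD j 0) := by
  intro j hj
  obtain ⟨h1, h2⟩ := parseOf_spec lo hr
  have e1 := desc_unparse lo (vb_tf h1) j (by rw [← Tw, Tw_length lo hr]; omega)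
  rw [← Tw] at e1
  have e2 := desc_unparse lo h1 j (by rw [h2]; omega)
  rw [h2] at e2
  rw [e1, e2, blockLens_tf h1]

lemma Tw_count (hr : ∀ x ∈ r, x = lo ∨ x = lo + 1) : (Tw lo r).count lo = r.count (lo+1) ∧ (Tw lo r).count (lo+1) = r.count lo := by
  obtain ⟨h1, h2⟩ := parseOf_spec lo hr
  obtain ⟨s1, s2⟩ := sum_tf h1
  constructor
  · rw [Tw, count_unparse_lo, s1, ← count_unparse_hi lo _, h2]
  · rw [Tw, count_unparse_hi, s2, ← count_unparse_lo lo _, h2]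

lemma Tw_count_other (hr : ∀ x ∈ r, x = lo ∨ x = lo + 1) {z : ℤ} (h1 : z ≠ lo) (h2 : z ≠ lo + 1) :
    (Tw lo r).count z = r.count z := by
  obtain ⟨hv, hu⟩ := parseOf_spec lo hr
  rw [Tw, count_unparse_other lo _ h1 h2, ← hu, count_unparse_other lo _ h1 h2]

lemma Tw_act : ∀ x ∈ Tw lo r, act lo x = true := fun x hx => act_true lo |>.mpr (Tw_mem lo hx)

lemma Tw_invol (hr : ∀ x ∈ r, x = lo ∨ x = lo + 1) : Tw lo (Tw lo r) = r := by
  obtain ⟨h1, h2⟩ := parseOf_spec lo hr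
  have hp : parseOf lo (Tw lo r) = tf (parseOf lo r) := by
    have hvb := vb_tf h1
    obtain ⟨g1, g2⟩ := parseOf_spec lo (fun x hx => Tw_mem lo hx)
    exact unparse_injective lo _ _ false g1 hvb g2
  rw [Tw, hp, tf_tf h1, h2]

end RunLemmas

noncomputable def T : List ℤ → List ℤ
  | [] => []
  | x :: xs =>
    if act lo x then
      Tw lo ((x :: xs).takeWhile (act lo)) ++ T ((x :: xs).dropWhile (act lo))
    else x :: T xs
termination_by l => l.length
decreasing_by
  · simp only [List.length_cons]
    have h1 : (x :: xs).dropWhile (act lo) = xs.dropWhile (act lo) :=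
      List.dropWhile_cons_of_pos (by assumption)
    rw [h1]
    have := (List.dropWhile_sublist (l := xs) (act lo)).length_le
    omega
  · simp [Nat.lt_succ_self]

lemma T_nil : T lo [] = [] := by rw [T]

lemma T_cons_pos {x : ℤ} {xs : List ℤ} (h : act lo x = true) :
    T lo (x :: xs) = Tw lo ((x :: xs).takeWhile (act lo)) ++ T lo ((x :: xs).dropWhile (act lo)) := by
  rw [T, if_pos h]

lemma T_cons_neg {x : ℤ} {xs : List ℤ} (h : act lo x = false) :
    T lo (x :: xs) = x :: T lo xs := by
  rw [T, if_neg (by simp [h])]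


lemma cmp_act {u u' y : ℤ} (hu : u = lo ∨ u = lo + 1) (hu' : u' = lo ∨ u' = lo + 1)
    (hy : act lo y = false) : (y < u ↔ y < u') ∧ (u < y ↔ u' < y) := by
  rw [act_false] at hy
  obtain ⟨hy1, hy2⟩ := hy
  constructor
  · rcases hu with rfl | rfl <;> rcases hu' with rfl | rfl <;> omega
  · rcases hu with rfl | rfl <;> rcases hu' with rfl | rfl <;> omega

lemma T_main : ∀ (N : ℕ) (w : List ℤ), w.length ≤ N →
    ((T lo w).length = w.length ∧
      (∀ j, j < w.length → act lo (w.getD j 0) = false → (T lo w).getD j 0 = w.getD j 0)) ∧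
    (∀ j, j < w.length →
      ((T lo w).getD j 0 = lo ∨ (T lo w).getD j 0 = lo + 1 ↔ w.getD j 0 = lo ∨ w.getD j 0 = lo + 1)) ∧
    (∀ j, j + 1 < w.length →
      ((T lo w).getD (j+1) 0 < (T lo w).getD j 0 ↔ w.getD (j+1) 0 < w.getD j 0)) := by
  intro N
  induction N with
  | zero =>
    intro w hw
    have : w = [] := List.eq_nil_of_length_eq_zero (by omega)
    subst this
    rw [T_nil]
    refine ⟨⟨rfl, ?_⟩, ?_, ?_⟩ <;> intro j hj <;> simp at hj
  | succ N ih =>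
    intro w hw
    cases hwe : w with
    | nil =>
      rw [T_nil]
      refine ⟨⟨rfl, ?_⟩, ?_, ?_⟩ <;> intro j hj <;> simp at hj
    | cons x xs =>
      subst hwe
      by_cases hx : act lo x = true
      · -- active head
        set r := (x :: xs).takeWhile (act lo) with hrdef
        set t := (x :: xs).dropWhile (act lo) with htdef
        have hrt : r ++ t = x :: xs := List.takeWhile_append_dropWhile
        have hr_act : ∀ y ∈ r, y = lo ∨ y = lo + 1 := fun y hy =>
          (act_true lo).mp (List.mem_takeWhile_imp hy)
        have hr_ne : r ≠ [] := by
          rw [hrdef, List.takeWhile_cons_of_pos hx]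
          simp
        have hrlen : 1 ≤ r.length := List.length_pos_iff.mpr hr_ne
        have hT : T lo (x :: xs) = Tw lo r ++ T lo t := T_cons_pos lo hx
        have hlen_rt : r.length + t.length = xs.length + 1 := by
          have := congrArg List.length hrt
          simpa using this
        have htN : t.length ≤ N := by
          simp only [List.length_cons] at hw
          omega
        obtain ⟨⟨ihl, ihp⟩, iha, ihd⟩ := ih t htN
        have hTwlen : (Tw lo r).length = r.length := Tw_length lo hr_act
        have hTlen : (T lo (x :: xs)).length = (x::xs).length := by
          rw [hT, List.length_append, hTwlen, ihl]
          simp only [List.length_cons]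
          omega
        have ht_head : ∀ z t', t = z :: t' → act lo z = false := fun z t' hz =>
          dropWhile_head_false (htdef ▸ hz)
        -- getD facts
        have hw_getD_lt : ∀ j, j < r.length → (x :: xs).getD j 0 = r.getD j 0 := by
          intro j hj
          conv_lhs => rw [← hrt]
          rw [List.getD_append _ _ _ _ hj]
        have hw_getD_ge : ∀ j, r.length ≤ j → (x :: xs).getD j 0 = t.getD (j - r.length) 0 := by
          intro j hj
          conv_lhs => rw [← hrt]
          rw [List.getD_append_right _ _ _ _ hj]
        have hT_getD_lt : ∀ j, j < r.length → (T lo (x :: xs)).getD j 0 = (Tw lo r).getD j 0 := by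
          intro j hj
          rw [hT, List.getD_append _ _ _ _ (by omega)]
        have hT_getD_ge : ∀ j, r.length ≤ j →
            (T lo (x :: xs)).getD j 0 = (T lo t).getD (j - r.length) 0 := by
          intro j hj
          rw [hT, List.getD_append_right _ _ _ _ (by omega), hTwlen]
        have hr_mem : ∀ j, j < r.length → r.getD j 0 = lo ∨ r.getD j 0 = lo + 1 := by
          intro j hj
          apply hr_act
          rw [List.getD_eq_getElem _ _ hj]
          exact List.getElem_mem _
        have hTw_mem : ∀ j, j < r.length →
            (Tw lo r).getD j 0 = lo ∨ (Tw lo r).getD j 0 = lo + 1 := by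
          intro j hj
          apply Tw_mem lo
          rw [List.getD_eq_getElem _ _ (by omega)]
          exact List.getElem_mem _
        refine ⟨⟨hTlen, ?_⟩, ?_, ?_⟩
        · -- pointwise inactive
          intro j hj hact
          rcases lt_or_ge j r.length with hc | hc
          · exfalso
            rw [hw_getD_lt j hc] at hact
            rcases hr_mem j hc with h | h <;> rw [h] at hact <;>
              rw [act_false] at hact <;> omega
          · rw [hT_getD_ge j hc, hw_getD_ge j hc]
            have hjt : j - r.length < t.length := by
              simp only [List.length_cons] at hj
              omega
            apply ihp _ hjt
            rw [← hw_getD_ge j hc]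
            exact hact
        · -- activity iff
          intro j hj
          rcases lt_or_ge j r.length with hc | hc
          · rw [hT_getD_lt j hc, hw_getD_lt j hc]
            exact iff_of_true (hTw_mem j hc) (hr_mem j hc)
          · rw [hT_getD_ge j hc, hw_getD_ge j hc]
            apply iha
            simp only [List.length_cons] at hj
            omega
        · -- descents
          intro j hj
          simp only [List.length_cons] at hj
          rcases lt_trichotomy (j+1) r.length with hc | hc | hc
          · rw [hT_getD_lt _ hc, hT_getD_lt _ (by omega),
              hw_getD_lt _ hc, hw_getD_lt _ (by omega)]
            exact Tw_desc lo hr_act j hc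
          · -- boundary
            have htlen : 1 ≤ t.length := by omega
            cases hte : t with
            | nil => rw [hte] at htlen; simp at htlen
            | cons z t' =>
              have hz_in : act lo z = false := ht_head z t' hte
              have htz : t.getD 0 0 = z := by rw [hte]; rfl
              have hTz : (T lo t).getD 0 0 = z := by
                rw [ihp 0 (by omega) (by rwa [htz])]
                exact htz
              rw [hT_getD_ge _ (by omega), hT_getD_lt _ (by omega),
                hw_getD_ge _ (by omega), hw_getD_lt _ (by omega), hc, Nat.sub_self,
                hTz, htz]
              exact (cmp_act lo (hTw_mem _ (by omega)) (hr_mem _ (by omega)) hz_in).1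
          · obtain ⟨j', rfl⟩ : ∃ j', j = r.length + j' := ⟨j - r.length, by omega⟩
            rw [hT_getD_ge _ (by omega), hT_getD_ge _ (by omega),
              hw_getD_ge _ (by omega), hw_getD_ge _ (by omega)]
            have e1 : r.length + j' + 1 - r.length = j' + 1 := by omega
            have e2 : r.length + j' - r.length = j' := by omega
            rw [e1, e2]
            exact ihd j' (by omega)
      · -- inactive head
        have hx' : act lo x = false := by
          cases h : act lo x
          · rfl
          · exact absurd h hx
        have hT : T lo (x :: xs) = x :: T lo xs := T_cons_neg lo hx'
        have hxsN : xs.length ≤ N := by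
          simp only [List.length_cons] at hw
          omega
        obtain ⟨⟨ihl, ihp⟩, iha, ihd⟩ := ih xs hxsN
        have hTlen : (T lo (x :: xs)).length = (x :: xs).length := by
          rw [hT]
          simp [ihl]
        refine ⟨⟨hTlen, ?_⟩, ?_, ?_⟩
        · intro j hj hact
          cases j with
          | zero => rw [hT]; rfl
          | succ j =>
            rw [hT, List.getD_cons_succ]
            rw [List.getD_cons_succ] at hact
            simp only [List.length_cons] at hj
            rw [List.getD_cons_succ]
            exact ihp j (by omega) hact
        · intro j hj
          cases j with
          | zero =>
            rw [hT]
            rfl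
          | succ j =>
            rw [hT, List.getD_cons_succ, List.getD_cons_succ]
            simp only [List.length_cons] at hj
            exact iha j (by omega)
        · intro j hj
          simp only [List.length_cons] at hj
          cases j with
          | zero =>
            rw [hT]
            simp only [List.getD_cons_succ, List.getD_cons_zero]
            by_cases hz : act lo (xs.getD 0 0) = true
            · have h0 : 0 < xs.length := by omega
              have hu := (iha 0 h0).mpr ((act_true lo).mp hz)
              exact (cmp_act lo hu ((act_true lo).mp hz) hx').2
            · have hz' : act lo (xs.getD 0 0) = false := by
                cases h : act lo (xs.getD 0 0)
                · rfl
                · exact absurd h hz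
              rw [ihp 0 (by omega) hz']
          | succ j =>
            rw [hT, List.getD_cons_succ, List.getD_cons_succ, List.getD_cons_succ,
              List.getD_cons_succ]
            exact ihd j (by omega)

lemma dropWhile_all {α : Type*} {p : α → Bool} {l : List α} (h : ∀ x ∈ l, p x = true) :
    l.dropWhile p = [] := by
  have := congrArg List.length (List.takeWhile_append_dropWhile (p := p) (l := l))
  rw [takeWhile_all h] at this
  simp only [List.length_append] at this
  exact List.eq_nil_of_length_eq_zero (by omega)

lemma T_count : ∀ (N : ℕ) (w : List ℤ), w.length ≤ N →
    (T lo w).count lo = w.count (lo + 1) ∧ (T lo w).count (lo + 1) = w.count lo ∧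
    (∀ z : ℤ, z ≠ lo → z ≠ lo + 1 → (T lo w).count z = w.count z) := by
  intro N
  induction N with
  | zero =>
    intro w hw
    have : w = [] := List.eq_nil_of_length_eq_zero (by omega)
    subst this
    rw [T_nil]
    exact ⟨rfl, rfl, fun _ _ _ => rfl⟩
  | succ N ih =>
    intro w hw
    cases hwe : w with
    | nil =>
      rw [T_nil]
      exact ⟨rfl, rfl, fun _ _ _ => rfl⟩
    | cons x xs =>
      subst hwe
      by_cases hx : act lo x = true
      · set r := (x :: xs).takeWhile (act lo) with hrdef
        set t := (x :: xs).dropWhile (act lo) with htdef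
        have hrt : r ++ t = x :: xs := List.takeWhile_append_dropWhile
        have hr_act : ∀ y ∈ r, y = lo ∨ y = lo + 1 := fun y hy =>
          (act_true lo).mp (List.mem_takeWhile_imp hy)
        have hr_ne : r ≠ [] := by
          rw [hrdef, List.takeWhile_cons_of_pos hx]; simp
        have hlen_rt : r.length + t.length = xs.length + 1 := by
          have := congrArg List.length hrt
          simpa using this
        have htN : t.length ≤ N := by
          have := List.length_pos_iff.mpr hr_ne
          simp only [List.length_cons] at hw
          omega
        obtain ⟨ih1, ih2, ih3⟩ := ih t htN
        have hT : T lo (x :: xs) = Tw lo r ++ T lo t := T_cons_pos lo hx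
        have hcw : ∀ z : ℤ, (x :: xs).count z = r.count z + t.count z := by
          intro z
          rw [← hrt, List.count_append]
        obtain ⟨c1, c2⟩ := Tw_count lo hr_act
        refine ⟨?_, ?_, ?_⟩
        · rw [hT, List.count_append, c1, ih1, hcw]
        · rw [hT, List.count_append, c2, ih2, hcw]
        · intro z hz1 hz2
          rw [hT, List.count_append, Tw_count_other lo hr_act hz1 hz2, ih3 z hz1 hz2, hcw]
      · have hx' : act lo x = false := by
          cases h : act lo x
          · rfl
          · exact absurd h hx
        have hT : T lo (x :: xs) = x :: T lo xs := T_cons_neg lo hx'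
        have hxsN : xs.length ≤ N := by
          simp only [List.length_cons] at hw
          omega
        obtain ⟨ih1, ih2, ih3⟩ := ih xs hxsN
        rw [act_false] at hx'
        refine ⟨?_, ?_, ?_⟩
        · rw [hT, List.count_cons, List.count_cons, ih1]
          simp [hx'.1, hx'.2]
        · rw [hT, List.count_cons, List.count_cons, ih2]
          simp [hx'.1, hx'.2]
        · intro z hz1 hz2
          rw [hT, List.count_cons, List.count_cons, ih3 z hz1 hz2]

lemma T_invol : ∀ (N : ℕ) (w : List ℤ), w.length ≤ N → T lo (T lo w) = w := by
  intro N
  induction N with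
  | zero =>
    intro w hw
    have : w = [] := List.eq_nil_of_length_eq_zero (by omega)
    subst this
    rw [T_nil, T_nil]
  | succ N ih =>
    intro w hw
    cases hwe : w with
    | nil => rw [T_nil, T_nil]
    | cons x xs =>
      subst hwe
      by_cases hx : act lo x = true
      · set r := (x :: xs).takeWhile (act lo) with hrdef
        set t := (x :: xs).dropWhile (act lo) with htdef
        have hrt : r ++ t = x :: xs := List.takeWhile_append_dropWhile
        have hr_act : ∀ y ∈ r, y = lo ∨ y = lo + 1 := fun y hy =>
          (act_true lo).mp (List.mem_takeWhile_imp hy)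
        have hr_ne : r ≠ [] := by
          rw [hrdef, List.takeWhile_cons_of_pos hx]; simp
        have hlen_rt : r.length + t.length = xs.length + 1 := by
          have := congrArg List.length hrt
          simpa using this
        have htN : t.length ≤ N := by
          have := List.length_pos_iff.mpr hr_ne
          simp only [List.length_cons] at hw
          omega
        have ht_head : ∀ z t', t = z :: t' → act lo z = false := fun z t' hz =>
          dropWhile_head_false (htdef ▸ hz)
        have hT : T lo (x :: xs) = Tw lo r ++ T lo t := T_cons_pos lo hx
        -- T lo t is [] or starts with an inactive letter
        have hTt_struct : T lo t = [] ∨ ∃ z u, T lo t = z :: u ∧ act lo z = false := by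
          cases hte : t with
          | nil => left; rw [T_nil]
          | cons z t' =>
            right
            have hz := ht_head z t' hte
            exact ⟨z, T lo t', by rw [T_cons_neg lo hz], hz⟩
        have htake : (Tw lo r ++ T lo t).takeWhile (act lo) = Tw lo r := by
          rw [List.takeWhile_append, if_pos (by rw [takeWhile_all (fun x hx => (act_true lo).mpr (Tw_mem lo hx))])]
          rcases hTt_struct with h | ⟨z, u, h, hz⟩
          · rw [h]; simp
          · rw [h, List.takeWhile_cons_of_neg (by simp [hz]), List.append_nil]
        have hdrop : (Tw lo r ++ T lo t).dropWhile (act lo) = T lo t := by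
          rw [List.dropWhile_append]
          rw [dropWhile_all (fun x hx => (act_true lo).mpr (Tw_mem lo hx))]
          simp only [List.isEmpty_nil, if_true]
          rcases hTt_struct with h | ⟨z, u, h, hz⟩
          · rw [h]; simp
          · rw [h, List.dropWhile_cons_of_neg (by simp [hz])]
        have hTwr_ne : Tw lo r ≠ [] := by
          have := Tw_length lo hr_act
          have hrl := List.length_pos_iff.mpr hr_ne
          exact List.ne_nil_of_length_pos (by omega)
        cases hTwe : Tw lo r with
        | nil => exact absurd hTwe hTwr_ne
        | cons y u =>
          have hy_act : act lo y = true := by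
            apply (act_true lo).mpr
            apply Tw_mem lo (r := r)
            rw [hTwe]
            simp
          rw [hT, hTwe, List.cons_append, T_cons_pos lo hy_act, ← List.cons_append, ← hTwe]
          rw [htake, hdrop]
          rw [Tw_invol lo hr_act, ih t htN, hrt]
      · have hx' : act lo x = false := by
          cases h : act lo x
          · rfl
          · exact absurd h hx
        have hxsN : xs.length ≤ N := by
          simp only [List.length_cons] at hw
          omega
        rw [T_cons_neg lo hx', T_cons_neg lo hx', ih xs hxsN]


end Core


section Arr
variable {n k : ℕ}

def rawWord (a : Arrangement n k) : List ℤ :=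
  (List.finRange n).map fun i =>
    if a.1.1 i = i then -(((a.1.2 i : ℕ) : ℤ) + 1) else ((a.1.1 i : ℕ) : ℤ) + 1

lemma dfWord_eq_raw (a : Arrangement n k) : dfWord a = posReduce (rawWord a) := rfl

@[simp] lemma rawWord_length (a : Arrangement n k) : (rawWord a).length = n := by
  simp [rawWord]

lemma rawWord_getD (a : Arrangement n k) (i : Fin n) :
    (rawWord a).getD i 0 =
      if a.1.1 i = i then -(((a.1.2 i : ℕ) : ℤ) + 1) else ((a.1.1 i : ℕ) : ℤ) + 1 := by
  rw [rawWord, List.getD_eq_getElem _ _ (by simp [i.isLt]), List.getElem_map]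
  congr 1 <;> rw [List.getElem_finRange] <;> congr 1 <;> exact (Fin.cast_val_eq_self i) ▸ rfl

lemma filter_pos_congr : ∀ (w v : List ℤ), w.length = v.length →
    (∀ j, j < w.length → ((0 < w.getD j 0 ↔ 0 < v.getD j 0) ∧
      (0 < w.getD j 0 → w.getD j 0 = v.getD j 0))) →
    w.filter (fun x => decide (0 < x)) = v.filter (fun x => decide (0 < x)) := by
  intro w
  induction w with
  | nil =>
    intro v hl _
    cases v with
    | nil => rfl
    | cons y ys => simp at hl
  | cons x xs ih =>
    intro v hl hp
    cases v with
    | nil => simp at hl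
    | cons y ys =>
      have h0 := hp 0 (by simp)
      simp only [List.getD_cons_zero] at h0
      have hrest : xs.filter (fun x => decide (0 < x)) = ys.filter (fun x => decide (0 < x)) := by
        apply ih ys (by simpa using hl)
        intro j hj
        have := hp (j+1) (by simpa using Nat.succ_lt_succ hj)
        simpa using this
      by_cases hx : 0 < x
      · have hy : 0 < y := h0.1.mp hx
        have hxy : x = y := h0.2 hx
        rw [List.filter_cons_of_pos (by simpa using hx), List.filter_cons_of_pos (by simpa using hy),
          hxy, hrest]
      · have hy : ¬ 0 < y := fun h => hx (h0.1.mpr h)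
        rw [List.filter_cons_of_neg (by simpa using hx), List.filter_cons_of_neg (by simpa using hy),
          hrest]

lemma rk_congr {w v : List ℤ}
    (hf : w.filter (fun x => decide (0 < x)) = v.filter (fun x => decide (0 < x))) (x : ℤ) :
    rk w x = rk v x := by
  rw [rk, rk]
  by_cases hx : 0 < x
  · rw [if_pos hx, if_pos hx]
    congr 2
    have e : ∀ u : List ℤ, (u.toFinset.filter fun y => 0 < y ∧ y ≤ x) =
        (u.filter (fun x => decide (0 < x))).toFinset.filter fun y => y ≤ x := by
      intro u
      rw [List.toFinset_filter]
      rw [Finset.filter_filter]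
      apply Finset.filter_congr
      intro y _
      simp only [decide_eq_true_eq, eq_iff_iff]
    rw [e, e, hf]
  · rw [if_neg hx, if_neg hx]

/-- main transfer: descents & positive part of posReduce agree when words are related -/
lemma dez_der_transfer {w v : List ℤ} (hlen : w.length = v.length)
    (hcmp : ∀ j, j + 1 < w.length → (w.getD (j+1) 0 < w.getD j 0 ↔ v.getD (j+1) 0 < v.getD j 0))
    (hpos : ∀ j, j < w.length → ((0 < w.getD j 0 ↔ 0 < v.getD j 0) ∧
      (0 < w.getD j 0 → w.getD j 0 = v.getD j 0))) :
    desSet (posReduce w) = desSet (posReduce v) ∧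
      posPart (posReduce w) = posPart (posReduce v) := by
  constructor
  · rw [desSet_posReduce, desSet_posReduce]
    exact desSet_congr hlen hcmp
  · rw [posPart_posReduce, posPart_posReduce]
    have hf := filter_pos_congr w v hlen hpos
    rw [hf]
    apply List.map_congr_left
    intro x hx
    exact rk_congr hf x

lemma fixCount_eq_count (a : Arrangement n k) (d : Fin k) :
    fixCount a d = (rawWord a).count (-((d : ℕ) : ℤ) - 1) := by
  rw [fixCount, rawWord]
  rw [show ∀ l : List ℤ, ∀ z : ℤ, l.count z = l.countP (fun y => y == z) from fun _ _ => rfl]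
  rw [List.countP_map]
  rw [List.countP_eq_length_filter]
  rw [← List.toFinset_card_of_nodup ((List.nodup_finRange n).filter _)]
  rw [List.toFinset_filter, List.toFinset_finRange]
  rw [Nat.card_eq_fintype_card, Fintype.card_subtype]
  congr 1
  apply Finset.filter_congr
  intro i _
  simp only [Function.comp_apply, beq_iff_eq, decide_eq_true_eq]
  by_cases hf : a.1.1 i = i
  · rw [if_pos hf]
    constructor
    · intro ⟨_, h⟩
      omega
    · intro h
      refine ⟨hf, ?_⟩
      apply Fin.ext
      omega
  · rw [if_neg hf]
    constructor
    · intro ⟨h, _⟩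
      exact absurd h hf
    · intro h
      exfalso
      have : (0:ℤ) < ((a.1.1 i : ℕ) : ℤ) + 1 := by positivity
      omega

section Swap
variable (c : ℕ) (hc : c + 1 < k)

noncomputable def swapColor (a : Arrangement n k) (j : Fin n) : Fin k :=
  if (T (-(c : ℤ) - 2) (rawWord a)).getD j 0 = -(c : ℤ) - 2 then ⟨c+1, hc⟩
  else if (T (-(c : ℤ) - 2) (rawWord a)).getD j 0 = -(c : ℤ) - 1 then ⟨c, by omega⟩
  else a.1.2 j

-- basic facts with lo := -(c:ℤ) - 2 ; note lo + 1 = -(c:ℤ) - 1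
lemma raw_act_false_of_nonfix (a : Arrangement n k) (i : Fin n) (h : a.1.1 i ≠ i) :
    act (-(c : ℤ) - 2) ((rawWord a).getD i 0) = false := by
  rw [rawWord_getD a i, if_neg h, act_false]
  constructor <;> intro hcon <;> omega

lemma raw_neg_iff_fix (a : Arrangement n k) (i : Fin n) :
    (rawWord a).getD i 0 < 0 ↔ a.1.1 i = i := by
  rw [rawWord_getD a i]
  by_cases h : a.1.1 i = i
  · rw [if_pos h]
    constructor
    · intro _; exact h
    · intro _; omega
  · rw [if_neg h]
    constructor
    · intro hcon; omega
    · intro hcon; exact absurd hcon h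

lemma swapColor_support (a : Arrangement n k) (j : Fin n) (h : a.1.1 j ≠ j) :
    ((swapColor c hc a j : Fin k) : ℕ) = 0 := by
  obtain ⟨⟨_, hptw⟩, _, _⟩ := T_main (-(c : ℤ) - 2) n (rawWord a) (by simp)
  have hact := raw_act_false_of_nonfix c a j h
  have hval := hptw j (by simp [j.isLt]) hact
  rw [act_false] at hact
  rw [swapColor, hval, if_neg hact.1, if_neg (by have := hact.2; omega)]
  exact a.2 j h

lemma swapColor_eq (b : Arrangement n k) (j : Fin n) :
    swapColor c hc b j =
      (if (T (-(c : ℤ) - 2) (rawWord b)).getD j 0 = -(c : ℤ) - 2 then (⟨c+1, hc⟩ : Fin k)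
       else if (T (-(c : ℤ) - 2) (rawWord b)).getD j 0 = -(c : ℤ) - 1 then ⟨c, by omega⟩
       else b.1.2 j) := rfl

noncomputable def swapArr (a : Arrangement n k) : Arrangement n k :=
  ⟨(a.1.1, swapColor c hc a), fun j hj => swapColor_support c hc a j hj⟩

lemma raw_swapArr (a : Arrangement n k) :
    rawWord (swapArr c hc a) = T (-(c : ℤ) - 2) (rawWord a) := by
  set lo : ℤ := -(c : ℤ) - 2 with hlo
  obtain ⟨⟨hTlen, hptw⟩, hTact, _⟩ := T_main lo n (rawWord a) (by simp)
  apply List.ext_getElem (by simp [hTlen])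
  intro j h1 h2
  rw [← List.getD_eq_getElem _ 0 h1, ← List.getD_eq_getElem _ 0 h2]
  have hj : j < n := by simpa using h1
  set i : Fin n := ⟨j, hj⟩ with hi
  have e1 : (rawWord (swapArr c hc a)).getD j 0 =
      if a.1.1 i = i then -(((swapColor c hc a i : ℕ) : ℤ) + 1) else ((a.1.1 i : ℕ) : ℤ) + 1 :=
    rawWord_getD (swapArr c hc a) i
  rw [e1]
  by_cases hf : a.1.1 i = i
  · rw [if_pos hf]
    by_cases hv1 : (T lo (rawWord a)).getD j 0 = lo
    · rw [swapColor, ← hlo, if_pos hv1, hv1]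
      simp only [hlo]
      push_cast
      ring
    · by_cases hv2 : (T lo (rawWord a)).getD j 0 = lo + 1
      · rw [swapColor, ← hlo, if_neg hv1, if_pos (by rw [hv2]; omega), hv2]
        simp only [hlo]
        push_cast
        ring
      · -- inactive value: T did not change this position
        have hTina : act lo ((T lo (rawWord a)).getD j 0) = false := by
          rw [act_false]
          exact ⟨hv1, hv2⟩
        have hina : act lo ((rawWord a).getD j 0) = false := by
          cases hcase : act lo ((rawWord a).getD j 0)
          · rfl
          · exfalso
            have := (hTact j (by simpa using hj)).mpr ((act_true lo).mp hcase)
            rw [act_false] at hTina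
            rcases this with h | h
            · exact hTina.1 h
            · exact hTina.2 h
        have hval := hptw j (by simpa using hj) hina
        rw [swapColor, ← hlo, if_neg hv1, if_neg (by rw [show lo + 1 = -(c:ℤ) - 1 by omega] at hv2; exact hv2)]
        rw [hval, rawWord_getD a i, if_pos hf]
    all_goals skip
  · rw [if_neg hf]
    have hval := hptw j (by simpa using hj) (raw_act_false_of_nonfix c a i hf)
    rw [hval, rawWord_getD a i, if_neg hf]

lemma swapArr_DEZ_Der (a : Arrangement n k) :
    DEZset (swapArr c hc a) = DEZset a ∧ Der (swapArr c hc a) = Der a := by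
  set lo : ℤ := -(c : ℤ) - 2 with hlo
  obtain ⟨⟨hTlen, hptw⟩, hTact, hTdesc⟩ := T_main lo n (rawWord a) (by simp)
  have hraw := raw_swapArr c hc a
  rw [← hlo] at hraw
  have htrans := dez_der_transfer (w := rawWord a) (v := rawWord (swapArr c hc a))
    (by rw [hraw]; simp [hTlen]) ?_ ?_
  · exact ⟨htrans.1.symm, htrans.2.symm⟩
  · intro j hj
    rw [hraw]
    have := hTdesc j (by simpa using hj)
    exact this.symm
  · intro j hj
    rw [hraw]
    have hjn : j < n := by simpa using hj
    by_cases hact : act lo ((rawWord a).getD j 0) = false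
    · rw [hptw j (by simpa using hjn) hact]
      exact ⟨Iff.rfl, fun _ => rfl⟩
    · have hact' : (rawWord a).getD j 0 = lo ∨ (rawWord a).getD j 0 = lo + 1 := by
        cases hcase : act lo ((rawWord a).getD j 0)
        · exact absurd hcase hact
        · exact (act_true lo).mp hcase
      have hTact' := (hTact j (by simpa using hjn)).mpr hact'
      refine ⟨⟨?_, ?_⟩, ?_⟩ <;> intro hcon <;>
        rcases hact' with h | h <;> rcases hTact' with h2 | h2 <;> omega

lemma swapArr_fixCount (a : Arrangement n k) (d : Fin k) :
    fixCount (swapArr c hc a) d =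
      fixCount a (Equiv.swap (⟨c, by omega⟩ : Fin k) (⟨c+1, hc⟩ : Fin k) d) := by
  set lo : ℤ := -(c : ℤ) - 2 with hlo
  obtain ⟨hc1, hc2, hc3⟩ := T_count lo n (rawWord a) (by simp)
  have hraw := raw_swapArr c hc a
  rw [← hlo] at hraw
  rw [fixCount_eq_count, fixCount_eq_count, hraw]
  by_cases hd1 : (d : ℕ) = c
  · have hde : d = (⟨c, by omega⟩ : Fin k) := Fin.ext hd1
    rw [hde, Equiv.swap_apply_left]
    have e1 : -((((⟨c, by omega⟩ : Fin k)) : ℕ) : ℤ) - 1 = lo + 1 := by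
      show -((c : ℕ) : ℤ) - 1 = lo + 1
      push_cast
      omega
    have e2 : -((((⟨c+1, hc⟩ : Fin k)) : ℕ) : ℤ) - 1 = lo := by
      show -(((c+1 : ℕ) : ℤ)) - 1 = lo
      push_cast
      omega
    rw [e1, e2, hc2]
  · by_cases hd2 : (d : ℕ) = c + 1
    · have hde : d = (⟨c+1, hc⟩ : Fin k) := Fin.ext hd2
      rw [hde, Equiv.swap_apply_right]
      have e1 : -((((⟨c+1, hc⟩ : Fin k)) : ℕ) : ℤ) - 1 = lo := by
        show -(((c+1 : ℕ) : ℤ)) - 1 = lo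
        push_cast
        omega
      have e2 : -((((⟨c, by omega⟩ : Fin k)) : ℕ) : ℤ) - 1 = lo + 1 := by
        show -((c : ℕ) : ℤ) - 1 = lo + 1
        push_cast
        omega
      rw [e1, e2, hc1]
    · rw [Equiv.swap_apply_of_ne_of_ne (fun h => hd1 (by rw [h]))
        (fun h => hd2 (by rw [h]))]
      apply hc3 <;> intro hcon <;> omega

lemma swapArr_invol (a : Arrangement n k) : swapArr c hc (swapArr c hc a) = a := by
  set lo : ℤ := -(c : ℤ) - 2 with hlo
  obtain ⟨⟨hTlen, hptw⟩, hTact, _⟩ := T_main lo n (rawWord a) (by simp)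
  have hinv : T lo (rawWord (swapArr c hc a)) = rawWord a := by
    rw [raw_swapArr]
    exact T_invol lo n (rawWord a) (by simp)
  apply Subtype.ext
  apply Prod.ext
  · rfl
  · funext j
    show swapColor c hc (swapArr c hc a) j = a.1.2 j
    rw [swapColor_eq c hc (swapArr c hc a) j, ← hlo, hinv]
    by_cases hv1 : (rawWord a).getD j 0 = lo
    · rw [if_pos hv1]
      -- the letter is lo, so j is a fixed point with color c+1
      have hfix : a.1.1 j = j := by
        rw [← raw_neg_iff_fix]
        omega
      have := rawWord_getD a j
      rw [if_pos hfix, hv1] at this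
      apply Fin.ext
      show c + 1 = ((a.1.2 j : ℕ))
      omega
    · rw [if_neg hv1]
      by_cases hv2 : (rawWord a).getD j 0 = -(c:ℤ) - 1
      · rw [if_pos hv2]
        have hfix : a.1.1 j = j := by
          rw [← raw_neg_iff_fix]
          omega
        have := rawWord_getD a j
        rw [if_pos hfix, hv2] at this
        apply Fin.ext
        show c = ((a.1.2 j : ℕ))
        omega
      · rw [if_neg hv2]
        -- inactive letter, swapColor of a at j is a.1.2 j
        have hina : act lo ((rawWord a).getD j 0) = false := by
          rw [act_false]
          refine ⟨hv1, ?_⟩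
          intro hcon
          apply hv2
          omega
        have hval := hptw j (by simp [j.isLt]) hina
        rw [act_false] at hina
        show swapColor c hc a j = a.1.2 j
        rw [swapColor_eq c hc a j, ← hlo, hval, if_neg hina.1,
          if_neg (by have := hina.2; omega)]

noncomputable def swapEquiv : Arrangement n k ≃ Arrangement n k where
  toFun := swapArr c hc
  invFun := swapArr c hc
  left_inv := swapArr_invol c hc
  right_inv := swapArr_invol c hc

end Swap

def GoodPerm (n k : ℕ) (τ : Equiv.Perm (Fin k)) : Prop :=
  ∃ E : Arrangement n k ≃ Arrangement n k,
    (∀ a, DEZset (E a) = DEZset a ∧ Der (E a) = Der a) ∧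
    (∀ a d, fixCount (E a) d = fixCount a (τ d))

lemma good_one : GoodPerm n k 1 := ⟨Equiv.refl _, fun _ => ⟨rfl, rfl⟩, fun _ _ => rfl⟩

lemma good_mul {σ τ : Equiv.Perm (Fin k)} (hσ : GoodPerm n k σ) (hτ : GoodPerm n k τ) :
    GoodPerm n k (σ * τ) := by
  obtain ⟨E1, hp1, hf1⟩ := hσ
  obtain ⟨E2, hp2, hf2⟩ := hτ
  refine ⟨E1.trans E2, fun a => ?_, fun a d => ?_⟩
  · simp only [Equiv.trans_apply]
    exact ⟨(hp2 (E1 a)).1.trans (hp1 a).1, (hp2 (E1 a)).2.trans (hp1 a).2⟩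
  · simp only [Equiv.trans_apply]
    rw [hf2 (E1 a) d, hf1 a (τ d)]
    rfl

lemma good_inv {τ : Equiv.Perm (Fin k)} (hτ : GoodPerm n k τ) : GoodPerm n k τ⁻¹ := by
  obtain ⟨E, hp, hf⟩ := hτ
  refine ⟨E.symm, fun a => ?_, fun a d => ?_⟩
  · have := hp (E.symm a)
    rw [E.apply_symm_apply] at this
    exact ⟨this.1.symm, this.2.symm⟩
  · have := hf (E.symm a) (τ⁻¹ d)
    rw [E.apply_symm_apply, show τ (τ⁻¹ d) = d from Equiv.apply_symm_apply τ d] at this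
    exact this.symm

lemma good_swap_adj (c : ℕ) (hc : c + 1 < k) :
    GoodPerm n k (Equiv.swap (⟨c, by omega⟩ : Fin k) (⟨c+1, hc⟩ : Fin k)) :=
  ⟨swapEquiv c hc, fun a => swapArr_DEZ_Der c hc a, fun a d => swapArr_fixCount c hc a d⟩

lemma good_swap_adj' (x : Fin k) (hlt : (x : ℕ) + 1 < k) :
    GoodPerm n k (Equiv.swap x (⟨(x : ℕ) + 1, hlt⟩ : Fin k)) := by
  obtain ⟨xv, hxv⟩ := x
  exact good_swap_adj xv hlt

lemma good_swap_dist : ∀ (d : ℕ) (x y : Fin k), (y : ℕ) = (x : ℕ) + d + 1 →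
    GoodPerm n k (Equiv.swap x y) := by
  intro d
  induction d with
  | zero =>
    intro x y hxy
    have hlt : (x : ℕ) + 1 < k := by
      have := y.isLt
      omega
    have hy : y = (⟨(x : ℕ) + 1, hlt⟩ : Fin k) :=
      Fin.ext (show (y : ℕ) = (x : ℕ) + 1 by omega)
    rw [hy]
    exact good_swap_adj' x hlt
  | succ d ih =>
    intro x y hxy
    have hzlt : (x : ℕ) + 1 < k := by
      have := y.isLt
      omega
    set z : Fin k := ⟨(x : ℕ) + 1, hzlt⟩ with hz
    have hzy : (y : ℕ) = (z : ℕ) + d + 1 := by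
      simp only [hz]
      omega
    have h1 : GoodPerm n k (Equiv.swap x z) := good_swap_adj' x hzlt
    have h2 : GoodPerm n k (Equiv.swap z y) := ih z y hzy
    have hkey : Equiv.swap x y = Equiv.swap x z * Equiv.swap z y * (Equiv.swap x z)⁻¹ := by
      rw [← Equiv.swap_apply_apply (Equiv.swap x z) z y]
      congr 1
      · exact (Equiv.swap_apply_right x z).symm
      · refine (Equiv.swap_apply_of_ne_of_ne ?_ ?_).symm
        · intro hcon
          rw [hcon] at hxy
          omega
        · intro hcon
          rw [hcon] at hxy
          simp only [hz] at hxy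
          omega
    rw [hkey]
    exact good_mul (good_mul h1 h2) (good_inv h1)

lemma good_swap {x y : Fin k} (hxy : x ≠ y) : GoodPerm n k (Equiv.swap x y) := by
  rcases lt_trichotomy (x : ℕ) (y : ℕ) with h | h | h
  · exact good_swap_dist ((y : ℕ) - (x : ℕ) - 1) x y (by omega)
  · exact absurd (Fin.ext h) hxy
  · rw [Equiv.swap_comm]
    exact good_swap_dist ((x : ℕ) - (y : ℕ) - 1) y x (by omega)

lemma good_all (τ : Equiv.Perm (Fin k)) : GoodPerm n k τ := by
  have hmem : τ ∈ Subgroup.closure {σ : Equiv.Perm (Fin k) | σ.IsSwap} := by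
    rw [Equiv.Perm.closure_isSwap]
    trivial
  refine Subgroup.closure_induction ?_ ?_ ?_ ?_ hmem
  · rintro σ ⟨x, y, hxy, rfl⟩
    exact good_swap hxy
  · exact good_one
  · intro σ τ' _ _ h1 h2
    exact good_mul h1 h2
  · intro σ _ h
    exact good_inv h


end Arr

theorem stmt6 (n k : ℕ) (hn : 1 ≤ n) (hk : 1 ≤ k) (m : Fin k → ℕ) (τ : Equiv.Perm (Fin k)) :
    ∃ Φ : {a : Arrangement n k // ∀ c, fixCount a c = m c} ≃
          {b : Arrangement n k // ∀ c, fixCount b c = m (τ c)},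
      ∀ a, DEZset a.1 = DEZset (Φ a).1 ∧ Der a.1 = Der (Φ a).1 := by
  obtain ⟨E, hp, hf⟩ := good_all (n := n) (k := k) τ
  refine ⟨Equiv.subtypeEquiv E fun a => ?_, fun a => ?_⟩
  · constructor
    · intro h d
      rw [hf a d, h (τ d)]
    · intro h d
      have := h (τ⁻¹ d)
      rw [hf a (τ⁻¹ d), show τ (τ⁻¹ d) = d from Equiv.apply_symm_apply τ d] at this
      exact this
  · constructor
    · exact (hp a.1).1.symm
    · exact (hp a.1).2.symm

end KArr
end

section
/- Let n,k ≥ 1, let m = (m_1,…,m_k) be an array of nonnegative integers, and let τ be a permutation of {1,…,k−1}. Set m' = (m_{τ(1)},…,m_{τ(k−1)},m_k). Then there exists a bijection from A_n^k(m) to A_n^k(m'), a ↦ b, such that DES(a) = DES(b), DEZ(a) = DEZ(b), and Der(a) = Der(b). -/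
open scoped Classical

namespace KArr

section BK

def ascB (Q b : ℕ → Bool) (i : ℕ) : Bool := Q i && Q (i+1) && !b i && b (i+1)

def segP (Q b : ℕ → Bool) (l r : ℕ) : Prop :=
  (∀ j ∈ Finset.Icc l r, Q j = true) ∧ ∀ j ∈ Finset.Ico l r, ascB Q b j = false

instance segP.dec (Q b : ℕ → Bool) (l r : ℕ) : Decidable (segP Q b l r) := by
  unfold segP; infer_instance

def segL (Q b : ℕ → Bool) (i : ℕ) : ℕ := i - Nat.findGreatest (fun d => segP Q b (i - d) i) i

def segR (Q b : ℕ → Bool) (n i : ℕ) : ℕ := i + Nat.findGreatest (fun d => segP Q b i (i + d)) n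

def cntT (b : ℕ → Bool) (L R : ℕ) : ℕ := ((Finset.Icc L R).filter fun j => b j = true).card
def cntF (b : ℕ → Bool) (L R : ℕ) : ℕ := ((Finset.Icc L R).filter fun j => b j = false).card

def segA (Q b : ℕ → Bool) (i : ℕ) : ℕ :=
  if 1 ≤ segL Q b i ∧ Q (segL Q b i - 1) = true then 1 else 0
def segB (Q b : ℕ → Bool) (n i : ℕ) : ℕ := if Q (segR Q b n i + 1) = true then 1 else 0

def BKfun (Q b : ℕ → Bool) (n i : ℕ) : Bool :=
  if Q i = true then
    decide (i + segB Q b n i < segL Q b i + cntF b (segL Q b i) (segR Q b n i) + segA Q b i)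
  else b i

variable {Q b : ℕ → Bool} {n i j : ℕ}

lemma segP_self (h : Q i = true) : segP Q b i i := by
  constructor
  · intro j hj
    simp only [Finset.mem_Icc] at hj
    have : j = i := le_antisymm hj.2 hj.1
    subst this; exact h
  · intro j hj
    simp only [Finset.Ico_self, Finset.notMem_empty] at hj

lemma segP_mono {l r l' r' : ℕ} (h : segP Q b l r) (h1 : l ≤ l') (h2 : r' ≤ r) :
    segP Q b l' r' := by
  constructor
  · intro j hj
    simp only [Finset.mem_Icc] at hj
    exact h.1 j (by simp only [Finset.mem_Icc]; omega)
  · intro j hj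
    simp only [Finset.mem_Ico] at hj
    exact h.2 j (by simp only [Finset.mem_Ico]; omega)

lemma segP_glue {l m r : ℕ} (h1 : segP Q b l m) (h2 : segP Q b m r) (hlm : l ≤ m) (hmr : m ≤ r) :
    segP Q b l r := by
  constructor
  · intro j hj
    simp only [Finset.mem_Icc] at hj
    by_cases hc : j ≤ m
    · exact h1.1 j (by simp only [Finset.mem_Icc]; omega)
    · exact h2.1 j (by simp only [Finset.mem_Icc]; omega)
  · intro j hj
    simp only [Finset.mem_Ico] at hj
    by_cases hc : j < m
    · exact h1.2 j (by simp only [Finset.mem_Ico]; omega)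
    · exact h2.2 j (by simp only [Finset.mem_Ico]; omega)

lemma segL_le (Q b : ℕ → Bool) (i : ℕ) : segL Q b i ≤ i := Nat.sub_le _ _
lemma le_segR (Q b : ℕ → Bool) (n i : ℕ) : i ≤ segR Q b n i := Nat.le_add_right _ _

lemma segP_segL (h : Q i = true) : segP Q b (segL Q b i) i :=
  Nat.findGreatest_spec (P := fun d => segP Q b (i - d) i) (Nat.zero_le i)
    (by simpa using segP_self (b := b) h)

lemma segP_segR (h : Q i = true) : segP Q b i (segR Q b n i) :=
  Nat.findGreatest_spec (P := fun d => segP Q b i (i + d)) (Nat.zero_le n)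
    (by simpa using segP_self (b := b) h)

lemma segP_full (h : Q i = true) : segP Q b (segL Q b i) (segR Q b n i) :=
  segP_glue (segP_segL h) (segP_segR h) (segL_le Q b i) (le_segR Q b n i)

lemma Q_of_seg (h : Q i = true) (h1 : segL Q b i ≤ j) (h2 : j ≤ segR Q b n i) : Q j = true :=
  (segP_full (n := n) h).1 j (by simp only [Finset.mem_Icc]; exact ⟨h1, h2⟩)

lemma asc_of_seg (h : Q i = true) (h1 : segL Q b i ≤ j) (h2 : j < segR Q b n i) :
    ascB Q b j = false :=
  (segP_full (n := n) h).2 j (by simp only [Finset.mem_Ico]; exact ⟨h1, h2⟩)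

lemma segL_min (h : Q i = true) (h1 : 1 ≤ segL Q b i) (h2 : Q (segL Q b i - 1) = true) :
    ascB Q b (segL Q b i - 1) = true := by
  by_contra hasc
  have hasc' : ascB Q b (segL Q b i - 1) = false := by
    cases hh : ascB Q b (segL Q b i - 1)
    · rfl
    · exact absurd hh hasc
  have hle : Nat.findGreatest (fun d => segP Q b (i - d) i) i ≤ i := Nat.findGreatest_le i
  have hLd : segL Q b i = i - Nat.findGreatest (fun d => segP Q b (i - d) i) i := rfl
  set d := Nat.findGreatest (fun d => segP Q b (i - d) i) i with hd
  have hgr := Nat.findGreatest_is_greatest (P := fun d => segP Q b (i - d) i)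
    (n := i) (k := d + 1) (by omega) (by omega)
  apply hgr
  have hseg : segP Q b (segL Q b i) i := segP_segL h
  constructor
  · intro j hj
    simp only [Finset.mem_Icc] at hj
    rcases eq_or_lt_of_le hj.1 with heq | hlt
    · rw [show j = segL Q b i - 1 by omega]
      exact h2
    · exact hseg.1 j (by simp only [Finset.mem_Icc]; omega)
  · intro j hj
    simp only [Finset.mem_Ico] at hj
    rcases eq_or_lt_of_le hj.1 with heq | hlt
    · rw [show j = segL Q b i - 1 by omega]
      exact hasc'
    · exact hseg.2 j (by simp only [Finset.mem_Ico]; omega)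

lemma segR_max (hQ : ∀ j, Q j = true → j < n) (h : Q i = true)
    (h2 : Q (segR Q b n i + 1) = true) : ascB Q b (segR Q b n i) = true := by
  by_contra hasc
  have hasc' : ascB Q b (segR Q b n i) = false := by
    cases hh : ascB Q b (segR Q b n i)
    · rfl
    · exact absurd hh hasc
  have hRd : segR Q b n i = i + Nat.findGreatest (fun d => segP Q b i (i + d)) n := rfl
  set d := Nat.findGreatest (fun d => segP Q b i (i + d)) n with hd
  have hlt : segR Q b n i + 1 < n := hQ _ h2
  have hgr := Nat.findGreatest_is_greatest (P := fun d => segP Q b i (i + d))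
    (n := n) (k := d + 1) (by omega) (by omega)
  apply hgr
  have hseg : segP Q b i (segR Q b n i) := segP_segR h
  constructor
  · intro j hj
    simp only [Finset.mem_Icc] at hj
    rcases eq_or_lt_of_le hj.2 with heq | hlt2
    · rw [show j = segR Q b n i + 1 by omega]
      exact h2
    · exact hseg.1 j (by simp only [Finset.mem_Icc]; omega)
  · intro j hj
    simp only [Finset.mem_Ico] at hj
    rcases eq_or_lt_of_le (show j ≤ segR Q b n i by omega) with heq | hlt2
    · rw [show j = segR Q b n i by omega]
      exact hasc'
    · exact hseg.2 j (by simp only [Finset.mem_Ico]; omega)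

lemma segLR_congr (hQ : ∀ j, Q j = true → j < n) (h : Q i = true)
    (h1 : segL Q b i ≤ j) (h2 : j ≤ segR Q b n i) :
    segL Q b j = segL Q b i ∧ segR Q b n j = segR Q b n i := by
  have hQj : Q j = true := Q_of_seg h h1 h2
  have hfull : segP Q b (segL Q b i) (segR Q b n i) := segP_full h
  have hLi := segL_le Q b i
  have hLj := segL_le Q b j
  have hiR := le_segR Q b n i
  have hjR := le_segR Q b n j
  have hA : segL Q b j ≤ segL Q b i := by
    have hs : segP Q b (segL Q b i) j := segP_mono hfull le_rfl h2
    have hfg : j - segL Q b i ≤ Nat.findGreatest (fun d => segP Q b (j - d) j) j :=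
      Nat.le_findGreatest (by omega)
        (by rw [show j - (j - segL Q b i) = segL Q b i by omega]; exact hs)
    have eJ : segL Q b j = j - Nat.findGreatest (fun d => segP Q b (j - d) j) j := rfl
    have hbJ : Nat.findGreatest (fun d => segP Q b (j - d) j) j ≤ j := Nat.findGreatest_le j
    omega
  have hB : segL Q b i ≤ segL Q b j := by
    by_cases hc : segL Q b j ≤ i
    · have hs1 : segP Q b (segL Q b j) j := segP_segL hQj
      have hs2 : segP Q b j (segR Q b n i) := segP_mono hfull h1 le_rfl
      have hs3 : segP Q b (segL Q b j) i :=
        segP_mono (segP_glue hs1 hs2 hLj h2) le_rfl hiR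
      have hfg : i - segL Q b j ≤ Nat.findGreatest (fun d => segP Q b (i - d) i) i :=
        Nat.le_findGreatest (by omega)
          (by rw [show i - (i - segL Q b j) = segL Q b j by omega]; exact hs3)
      have eI : segL Q b i = i - Nat.findGreatest (fun d => segP Q b (i - d) i) i := rfl
      have hbI : Nat.findGreatest (fun d => segP Q b (i - d) i) i ≤ i := Nat.findGreatest_le i
      omega
    · omega
  have hRiN : segR Q b n i < n := hQ _ (Q_of_seg h (by omega) le_rfl)
  have hC : segR Q b n i ≤ segR Q b n j := by
    have hs : segP Q b j (segR Q b n i) := segP_mono hfull h1 le_rfl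
    have hfg : segR Q b n i - j ≤ Nat.findGreatest (fun d => segP Q b j (j + d)) n :=
      Nat.le_findGreatest (by omega)
        (by rw [show j + (segR Q b n i - j) = segR Q b n i by omega]; exact hs)
    have eJ : segR Q b n j = j + Nat.findGreatest (fun d => segP Q b j (j + d)) n := rfl
    omega
  have hD : segR Q b n j ≤ segR Q b n i := by
    by_cases hc : i ≤ segR Q b n j
    · have hs1 : segP Q b (segL Q b i) j := segP_mono hfull le_rfl h2
      have hs2 : segP Q b j (segR Q b n j) := segP_segR hQj
      have hs3 : segP Q b i (segR Q b n j) :=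
        segP_mono (segP_glue hs1 hs2 h1 hjR) hLi le_rfl
      have hRjN : segR Q b n j < n := hQ _ (Q_of_seg hQj (by omega) le_rfl)
      have hfg : segR Q b n j - i ≤ Nat.findGreatest (fun d => segP Q b i (i + d)) n :=
        Nat.le_findGreatest (by omega)
          (by rw [show i + (segR Q b n j - i) = segR Q b n j by omega]; exact hs3)
      have eI : segR Q b n i = i + Nat.findGreatest (fun d => segP Q b i (i + d)) n := rfl
      omega
    · omega
  exact ⟨le_antisymm hA hB, le_antisymm hD hC⟩

lemma b_mono {j' : ℕ} (h : Q i = true) (hj1 : segL Q b i ≤ j) (hj2 : j ≤ j')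
    (hj3 : j' ≤ segR Q b n i) (hbj : b j = false) : b j' = false := by
  induction j', hj2 using Nat.le_induction with
  | base => exact hbj
  | succ m hm ih =>
    have hbm : b m = false := ih (by omega)
    have hasc : ascB Q b m = false := asc_of_seg (n := n) (b := b) h (by omega) (by omega)
    have hQm : Q m = true := Q_of_seg (n := n) (b := b) h (by omega) (by omega)
    have hQm1 : Q (m+1) = true := Q_of_seg (n := n) (b := b) h (by omega) (by omega)
    unfold ascB at hasc
    simpa [hQm, hQm1, hbm] using hasc

lemma b_struct (h : Q i = true) (hj1 : segL Q b i ≤ j) (hj2 : j ≤ segR Q b n i) :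
    b j = decide (j < segL Q b i + cntT b (segL Q b i) (segR Q b n i)) := by
  cases hbj : b j with
  | false =>
    have hsub : (Finset.Icc (segL Q b i) (segR Q b n i)).filter (fun t => b t = true) ⊆
        Finset.Ico (segL Q b i) j := by
      intro t ht
      simp only [Finset.mem_filter, Finset.mem_Icc] at ht
      simp only [Finset.mem_Ico]
      refine ⟨ht.1.1, ?_⟩
      by_contra hc
      have hbt : b t = false := b_mono h hj1 (by omega) ht.1.2 hbj
      rw [ht.2] at hbt
      cases hbt
    have hcard := Finset.card_le_card hsub
    rw [Nat.card_Ico] at hcard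
    symm
    simp only [decide_eq_false_iff_not]
    unfold cntT
    omega
  | true =>
    have hsub : Finset.Icc (segL Q b i) j ⊆
        (Finset.Icc (segL Q b i) (segR Q b n i)).filter (fun t => b t = true) := by
      intro t ht
      simp only [Finset.mem_Icc] at ht
      simp only [Finset.mem_filter, Finset.mem_Icc]
      refine ⟨⟨ht.1, by omega⟩, ?_⟩
      cases hbt : b t with
      | true => rfl
      | false =>
        have := b_mono h ht.1 ht.2 hj2 hbt
        rw [hbj] at this
        cases this
    have hcard := Finset.card_le_card hsub
    rw [Nat.card_Icc] at hcard
    symm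
    simp only [decide_eq_true_eq]
    unfold cntT
    omega

lemma cntT_add_cntF (b : ℕ → Bool) (L R : ℕ) : cntT b L R + cntF b L R = R + 1 - L := by
  classical
  unfold cntT cntF
  rw [← Nat.card_Icc L R,
    ← Finset.card_filter_add_card_filter_not (s := Finset.Icc L R)
      (p := fun t => b t = true)]
  congr 1
  congr 1
  apply Finset.filter_congr
  intro x _
  simp

lemma segA01 (Q b : ℕ → Bool) (i : ℕ) : segA Q b i = 0 ∨ segA Q b i = 1 := by
  unfold segA; split_ifs
  exacts [Or.inr rfl, Or.inl rfl]

lemma segB01 (Q b : ℕ → Bool) (n i : ℕ) : segB Q b n i = 0 ∨ segB Q b n i = 1 := by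
  unfold segB; split_ifs
  exacts [Or.inr rfl, Or.inl rfl]

lemma segA_imp (h : Q i = true) (hA : segA Q b i = 1) : b (segL Q b i) = true := by
  unfold segA at hA
  split_ifs at hA with hcond
  have hasc := segL_min h hcond.1 hcond.2
  unfold ascB at hasc
  simp only [Bool.and_eq_true] at hasc
  have hb := hasc.2
  rwa [show segL Q b i - 1 + 1 = segL Q b i by omega] at hb

lemma segB_imp (hQ : ∀ j, Q j = true → j < n) (h : Q i = true) (hB : segB Q b n i = 1) :
    b (segR Q b n i) = false := by
  unfold segB at hB
  split_ifs at hB with hcond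
  have hasc := segR_max hQ h hcond
  unfold ascB at hasc
  simp only [Bool.and_eq_true] at hasc
  simpa using hasc.1.2

lemma segA_le_p (h : Q i = true) (hA : segA Q b i = 1) :
    1 ≤ cntT b (segL Q b i) (segR Q b n i) := by
  have hb := segA_imp h hA
  have := b_struct (n := n) (b := b) h le_rfl (by
    have := segL_le Q b i; have := le_segR Q b n i; omega)
  rw [hb] at this
  have := of_decide_eq_true this.symm
  omega

lemma segB_le_q (hQ : ∀ j, Q j = true → j < n) (h : Q i = true) (hB : segB Q b n i = 1) :
    1 ≤ cntF b (segL Q b i) (segR Q b n i) := by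
  have hb := segB_imp hQ h hB
  have hs := b_struct (n := n) (b := b) h (by
    have := segL_le Q b i; have := le_segR Q b n i; omega) le_rfl
  rw [hb] at hs
  have hd := of_decide_eq_false hs.symm
  have hpq := cntT_add_cntF b (segL Q b i) (segR Q b n i)
  have := segL_le Q b i
  have := le_segR Q b n i
  omega

lemma seg_data_congr (hQ : ∀ j, Q j = true → j < n) (h : Q i = true)
    (h1 : segL Q b i ≤ j) (h2 : j ≤ segR Q b n i) :
    segL Q b j = segL Q b i ∧ segR Q b n j = segR Q b n i ∧
      segA Q b j = segA Q b i ∧ segB Q b n j = segB Q b n i := by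
  obtain ⟨hL, hR⟩ := segLR_congr hQ h h1 h2
  refine ⟨hL, hR, ?_, ?_⟩
  · unfold segA; rw [hL]
  · unfold segB; rw [hR]

lemma BKfun_of_Q (h : Q i = true) :
    BKfun Q b n i =
      decide (i + segB Q b n i < segL Q b i + cntF b (segL Q b i) (segR Q b n i) + segA Q b i) := by
  unfold BKfun; rw [if_pos h]

lemma BKfun_of_not_Q (h : Q i = false) : BKfun Q b n i = b i := by
  unfold BKfun; rw [if_neg (by simp [h])]

lemma ascB_BKfun (hQ : ∀ j, Q j = true → j < n) (j : ℕ) :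
    ascB Q (BKfun Q b n) j = ascB Q b j := by
  unfold ascB
  cases hQj : Q j with
  | false => simp [hQj]
  | true =>
    cases hQj1 : Q (j+1) with
    | false => simp [hQj1]
    | true =>
      simp only [hQj, hQj1, Bool.true_and]
      have hjR : j ≤ segR Q b n j := le_segR Q b n j
      rcases eq_or_lt_of_le hjR with heq | hlt
      · -- boundary case: j = segR j
        have hQR1 : Q (segR Q b n j + 1) = true := by rw [← heq]; exact hQj1
        have hasc : ascB Q b j = true := by
          have := segR_max hQ hQj hQR1
          rwa [← heq] at this
        have hL := segL_le Q b j
        have hpq := cntT_add_cntF b (segL Q b j) (segR Q b n j)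
        have hA01 := segA01 Q b j
        have hAp : segA Q b j = 1 → 1 ≤ cntT b (segL Q b j) (segR Q b n j) :=
          fun hA => segA_le_p hQj hA
        have hB1 : segB Q b n j = 1 := by unfold segB; rw [if_pos hQR1]
        have hBKj : BKfun Q b n j = false := by
          rw [BKfun_of_Q hQj]
          simp only [decide_eq_false_iff_not]
          omega
        -- segment of j+1 starts at j+1
        have hLj1 : segL Q b (j+1) = j + 1 := by
          by_contra hne
          have hle := segL_le Q b (j+1)
          have h1 : segL Q b (j+1) ≤ j := by omega
          have := (segP_segL (b := b) hQj1).2 j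
            (by simp only [Finset.mem_Ico]; omega)
          rw [hasc] at this
          cases this
        have hA1 : segA Q b (j+1) = 1 := by
          unfold segA
          rw [if_pos]
          refine ⟨by omega, ?_⟩
          rw [hLj1]
          simpa using hQj
        have hBq1 : segB Q b n (j+1) = 1 → 1 ≤ cntF b (segL Q b (j+1)) (segR Q b n (j+1)) :=
          fun hB => segB_le_q hQ hQj1 hB
        have hB01 := segB01 Q b n (j+1)
        have hBKj1 : BKfun Q b n (j+1) = true := by
          rw [BKfun_of_Q hQj1]
          simp only [decide_eq_true_eq]
          rw [hLj1] at hBq1 ⊢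
          omega
        rw [hBKj, hBKj1]
        unfold ascB at hasc
        simp only [hQj, hQj1, Bool.true_and] at hasc
        rw [hasc]
        rfl
      · -- interior case
        have hLj := segL_le Q b j
        have hascf : ascB Q b j = false := asc_of_seg (n := n) hQj hLj hlt
        have hdata := seg_data_congr hQ hQj (by omega) (by omega : j + 1 ≤ segR Q b n j)
        have e1 : BKfun Q b n j =
            decide (j + segB Q b n j < segL Q b j + cntF b (segL Q b j) (segR Q b n j) + segA Q b j) :=
          BKfun_of_Q hQj
        have e2 : BKfun Q b n (j+1) =
            decide (j + 1 + segB Q b n j <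
              segL Q b j + cntF b (segL Q b j) (segR Q b n j) + segA Q b j) := by
          rw [BKfun_of_Q hQj1, hdata.1, hdata.2.1, hdata.2.2.1, hdata.2.2.2]
        unfold ascB at hascf
        simp only [hQj, hQj1, Bool.true_and] at hascf
        rw [hascf, e1, e2]
        by_cases hT : j + segB Q b n j < segL Q b j + cntF b (segL Q b j) (segR Q b n j) + segA Q b j
        · simp [hT]
        · have hT2 : ¬ (j + 1 + segB Q b n j <
              segL Q b j + cntF b (segL Q b j) (segR Q b n j) + segA Q b j) := by omega
          simp [hT, hT2]

lemma findGreatest_congr {P P' : ℕ → Prop} [DecidablePred P] [DecidablePred P']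
    (h : ∀ m, P m ↔ P' m) : ∀ N, Nat.findGreatest P N = Nat.findGreatest P' N
  | 0 => rfl
  | (N+1) => by
    rw [Nat.findGreatest_succ, Nat.findGreatest_succ, findGreatest_congr h N,
      if_congr (h (N+1)) rfl rfl]

lemma segP_BK (hQ : ∀ j, Q j = true → j < n) (l r : ℕ) :
    segP Q (BKfun Q b n) l r ↔ segP Q b l r := by
  unfold segP
  constructor <;> rintro ⟨x, y⟩ <;> refine ⟨x, fun j hj => ?_⟩
  · rw [← ascB_BKfun hQ j]; exact y j hj
  · rw [ascB_BKfun hQ j]; exact y j hj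

lemma segL_BK (hQ : ∀ j, Q j = true → j < n) (i : ℕ) :
    segL Q (BKfun Q b n) i = segL Q b i := by
  unfold segL
  rw [findGreatest_congr (fun d => segP_BK hQ (i - d) i) i]

lemma segR_BK (hQ : ∀ j, Q j = true → j < n) (i : ℕ) :
    segR Q (BKfun Q b n) n i = segR Q b n i := by
  unfold segR
  rw [findGreatest_congr (fun d => segP_BK hQ i (i + d)) n]

lemma segA_BK (hQ : ∀ j, Q j = true → j < n) (i : ℕ) :
    segA Q (BKfun Q b n) i = segA Q b i := by
  unfold segA; rw [segL_BK hQ]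

lemma segB_BK (hQ : ∀ j, Q j = true → j < n) (i : ℕ) :
    segB Q (BKfun Q b n) n i = segB Q b n i := by
  unfold segB; rw [segR_BK hQ]

lemma cntT_BKfun (hQ : ∀ j, Q j = true → j < n) (h : Q i = true) :
    cntT (BKfun Q b n) (segL Q b i) (segR Q b n i) =
      cntF b (segL Q b i) (segR Q b n i) + segA Q b i - segB Q b n i := by
  have hpq := cntT_add_cntF b (segL Q b i) (segR Q b n i)
  have hLi := segL_le Q b i
  have hiR := le_segR Q b n i
  have hA01 := segA01 Q b i
  have hB01 := segB01 Q b n i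
  have hAp : segA Q b i = 1 → 1 ≤ cntT b (segL Q b i) (segR Q b n i) := segA_le_p h
  have hBq : segB Q b n i = 1 → 1 ≤ cntF b (segL Q b i) (segR Q b n i) := segB_le_q hQ h
  unfold cntT
  have hfe : (Finset.Icc (segL Q b i) (segR Q b n i)).filter (fun t => BKfun Q b n t = true) =
      Finset.Ico (segL Q b i)
        (segL Q b i + cntF b (segL Q b i) (segR Q b n i) + segA Q b i - segB Q b n i) := by
    ext t
    simp only [Finset.mem_filter, Finset.mem_Icc, Finset.mem_Ico]
    constructor
    · rintro ⟨⟨ht1, ht2⟩, ht3⟩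
      have hdata := seg_data_congr hQ h ht1 ht2
      rw [BKfun_of_Q (Q_of_seg h ht1 ht2), hdata.1, hdata.2.1, hdata.2.2.1, hdata.2.2.2] at ht3
      have := of_decide_eq_true ht3
      omega
    · rintro ⟨ht1, ht2⟩
      have ht2' : t ≤ segR Q b n i := by omega
      have hdata := seg_data_congr hQ h ht1 ht2'
      refine ⟨⟨ht1, ht2'⟩, ?_⟩
      rw [BKfun_of_Q (Q_of_seg h ht1 ht2'), hdata.1, hdata.2.1, hdata.2.2.1, hdata.2.2.2]
      simp only [decide_eq_true_eq]
      omega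
  rw [hfe, Nat.card_Ico]
  omega

lemma BKfun_invol (hQ : ∀ j, Q j = true → j < n) (i : ℕ) :
    BKfun Q (BKfun Q b n) n i = b i := by
  cases hQi : Q i with
  | false => rw [BKfun_of_not_Q hQi, BKfun_of_not_Q hQi]
  | true =>
    rw [BKfun_of_Q hQi, segL_BK hQ, segR_BK hQ, segA_BK hQ, segB_BK hQ]
    have h1 := cntT_add_cntF (BKfun Q b n) (segL Q b i) (segR Q b n i)
    have h2 := cntT_BKfun (b := b) hQ hQi
    have hpq := cntT_add_cntF b (segL Q b i) (segR Q b n i)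
    have hLi := segL_le Q b i
    have hiR := le_segR Q b n i
    have hA01 := segA01 Q b i
    have hB01 := segB01 Q b n i
    have hAp : segA Q b i = 1 → 1 ≤ cntT b (segL Q b i) (segR Q b n i) := segA_le_p hQi
    have hBq : segB Q b n i = 1 → 1 ≤ cntF b (segL Q b i) (segR Q b n i) := segB_le_q hQ hQi
    have hbi := b_struct (n := n) hQi hLi hiR
    rw [hbi]
    rw [decide_eq_decide]
    omega

lemma sum_segA_eq_sum_segB (hQ : ∀ j, Q j = true → j < n) :
    ∑ s ∈ (Finset.range n).filter (fun s => Q s = true ∧ segL Q b s = s), segA Q b s =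
    ∑ s ∈ (Finset.range n).filter (fun s => Q s = true ∧ segL Q b s = s), segB Q b n s := by
  classical
  set S := (Finset.range n).filter (fun s => Q s = true ∧ segL Q b s = s) with hS
  have hsumA : ∑ s ∈ S, segA Q b s =
      (S.filter (fun s => 1 ≤ segL Q b s ∧ Q (segL Q b s - 1) = true)).card := by
    rw [Finset.card_filter]
    apply Finset.sum_congr rfl
    intro s _
    rfl
  have hsumB : ∑ s ∈ S, segB Q b n s =
      (S.filter (fun s => Q (segR Q b n s + 1) = true)).card := by
    rw [Finset.card_filter]
    apply Finset.sum_congr rfl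
    intro s _
    rfl
  rw [hsumA, hsumB]
  symm
  apply Finset.card_bij' (fun s _ => segR Q b n s + 1) (fun t _ => segL Q b (t - 1))
  · -- maps to
    intro s hs
    simp only [hS, Finset.mem_filter, Finset.mem_range] at hs
    obtain ⟨⟨hsn, hQs, hLs⟩, hQR1⟩ := hs
    have hQRs : Q (segR Q b n s) = true := Q_of_seg hQs (by
      have := segL_le Q b s; have := le_segR Q b n s; omega) le_rfl
    have hasc : ascB Q b (segR Q b n s) = true := segR_max hQ hQs hQR1
    have hLt : segL Q b (segR Q b n s + 1) = segR Q b n s + 1 := by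
      by_contra hne
      have hle := segL_le Q b (segR Q b n s + 1)
      have h1 : segL Q b (segR Q b n s + 1) ≤ segR Q b n s := by omega
      have := (segP_segL (b := b) hQR1).2 (segR Q b n s)
        (by simp only [Finset.mem_Ico]; omega)
      rw [hasc] at this
      cases this
    simp only [hS, Finset.mem_filter, Finset.mem_range]
    refine ⟨⟨hQ _ hQR1, hQR1, hLt⟩, by omega, ?_⟩
    rw [hLt]
    simpa using hQRs
  · -- inverse maps to
    intro t ht
    simp only [hS, Finset.mem_filter, Finset.mem_range] at ht
    obtain ⟨⟨htn, hQt, hLt⟩, h1t, hQt1⟩ := ht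
    rw [hLt] at h1t hQt1
    have hasc : ascB Q b (t - 1) = true := by
      have := segL_min hQt (by rw [hLt]; omega) (by rw [hLt]; exact hQt1)
      rwa [hLt] at this
    have hQt1' : Q (t - 1) = true := hQt1
    have hRt1 : segR Q b n (t - 1) = t - 1 := by
      by_contra hne
      have hge := le_segR Q b n (t - 1)
      have h1 : t - 1 < segR Q b n (t - 1) := by omega
      have := (segP_segR (n := n) (b := b) hQt1').2 (t - 1)
        (by simp only [Finset.mem_Ico]; omega)
      rw [hasc] at this
      cases this
    simp only [hS, Finset.mem_filter, Finset.mem_range]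
    have hQL : Q (segL Q b (t-1)) = true := Q_of_seg (n := n) (b := b) hQt1' le_rfl
      (by have := segL_le Q b (t-1); have := le_segR Q b n (t-1); omega)
    have hcong2 := segLR_congr (n := n) (b := b) hQ hQt1' le_rfl
      (by have := segL_le Q b (t-1); have := le_segR Q b n (t-1); omega)
    refine ⟨⟨hQ _ hQL, hQL, hcong2.1⟩, ?_⟩
    rw [hcong2.2, hRt1, show t - 1 + 1 = t by omega]
    exact hQt
  · intro s hs
    simp only [hS, Finset.mem_filter, Finset.mem_range] at hs
    obtain ⟨⟨hsn, hQs, hLs⟩, hQR1⟩ := hs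
    have hcong := segLR_congr (n := n) (b := b) hQ hQs
      (by have := segL_le Q b s; have := le_segR Q b n s; omega) le_rfl
    rw [show segR Q b n s + 1 - 1 = segR Q b n s by omega, hcong.1, hLs]
  · intro t ht
    simp only [hS, Finset.mem_filter, Finset.mem_range] at ht
    obtain ⟨⟨htn, hQt, hLt⟩, h1t, hQt1⟩ := ht
    rw [hLt] at h1t hQt1
    have hasc : ascB Q b (t - 1) = true := by
      have := segL_min hQt (by rw [hLt]; omega) (by rw [hLt]; exact hQt1)
      rwa [hLt] at this
    have hQt1' : Q (t - 1) = true := hQt1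
    have hRt1 : segR Q b n (t - 1) = t - 1 := by
      by_contra hne
      have hge := le_segR Q b n (t - 1)
      have h1 : t - 1 < segR Q b n (t - 1) := by omega
      have := (segP_segR (n := n) (b := b) hQt1').2 (t - 1)
        (by simp only [Finset.mem_Ico]; omega)
      rw [hasc] at this
      cases this
    have hcong2 := segLR_congr (n := n) (b := b) hQ hQt1' le_rfl
      (by have := segL_le Q b (t-1); have := le_segR Q b n (t-1); omega)
    rw [hcong2.2, hRt1]
    omega

lemma fiber_card (hQ : ∀ j, Q j = true → j < n) (P : ℕ → Prop) [DecidablePred P] :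
    ((Finset.range n).filter fun i => Q i = true ∧ P i).card =
      ∑ s ∈ (Finset.range n).filter (fun s => Q s = true ∧ segL Q b s = s),
        ((Finset.Icc s (segR Q b n s)).filter fun j => P j).card := by
  classical
  set S := (Finset.range n).filter (fun s => Q s = true ∧ segL Q b s = s) with hS
  rw [Finset.card_eq_sum_card_fiberwise (f := segL Q b) (t := S) ?_]
  · apply Finset.sum_congr rfl
    intro s hs
    simp only [hS, Finset.mem_filter, Finset.mem_range] at hs
    obtain ⟨hsn, hQs, hLs⟩ := hs
    congr 1
    ext j
    simp only [Finset.mem_filter, Finset.mem_range, Finset.mem_Icc]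
    constructor
    · rintro ⟨⟨hjn, hQj, hPj⟩, hLj⟩
      have hcong := segLR_congr (n := n) (b := b) hQ hQj (le_of_eq hLj)
        (by have := segL_le Q b j; have := le_segR Q b n j; omega)
      refine ⟨⟨?_, ?_⟩, hPj⟩
      · rw [← hLj]; exact segL_le Q b j
      · rw [hcong.2]; exact le_segR Q b n j
    · rintro ⟨⟨hsj, hjR⟩, hPj⟩
      have hQj : Q j = true := Q_of_seg (n := n) (b := b) hQs (by rw [hLs]; exact hsj) hjR
      have hcong := segLR_congr (n := n) (b := b) hQ hQs (by rw [hLs]; exact hsj) hjR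
      exact ⟨⟨hQ _ hQj, hQj, hPj⟩, hcong.1.trans hLs⟩
  · intro x hx
    simp only [Finset.mem_coe, Finset.mem_filter, Finset.mem_range] at hx
    obtain ⟨hxn, hQx, _⟩ := hx
    have hQL : Q (segL Q b x) = true := Q_of_seg (n := n) (b := b) hQx le_rfl
      (by have := segL_le Q b x; have := le_segR Q b n x; omega)
    have hcong := segLR_congr (n := n) (b := b) hQ hQx le_rfl
      (by have := segL_le Q b x; have := le_segR Q b n x; omega)
    simp only [hS, Finset.mem_coe, Finset.mem_filter, Finset.mem_range]
    exact ⟨hQ _ hQL, hQL, hcong.1⟩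

lemma BK_count (hQ : ∀ j, Q j = true → j < n) :
    ((Finset.range n).filter fun i => Q i = true ∧ BKfun Q b n i = true).card =
    ((Finset.range n).filter fun i => Q i = true ∧ b i = false).card := by
  classical
  rw [fiber_card hQ (fun i => BKfun Q b n i = true), fiber_card hQ (fun i => b i = false)]
  set S := (Finset.range n).filter (fun s => Q s = true ∧ segL Q b s = s) with hS
  have e1 : ∀ s ∈ S, ((Finset.Icc s (segR Q b n s)).filter fun j => BKfun Q b n j = true).card =
      cntF b s (segR Q b n s) + segA Q b s - segB Q b n s := by
    intro s hs
    simp only [hS, Finset.mem_filter, Finset.mem_range] at hs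
    obtain ⟨hsn, hQs, hLs⟩ := hs
    have := cntT_BKfun (b := b) hQ hQs
    rw [hLs] at this
    exact this
  have e2 : ∀ s ∈ S, ((Finset.Icc s (segR Q b n s)).filter fun j => b j = false).card =
      cntF b s (segR Q b n s) := fun s _ => rfl
  rw [Finset.sum_congr rfl e1, Finset.sum_congr rfl e2]
  have hBle : ∀ s ∈ S, segB Q b n s ≤ cntF b s (segR Q b n s) + segA Q b s := by
    intro s hs
    simp only [hS, Finset.mem_filter, Finset.mem_range] at hs
    obtain ⟨hsn, hQs, hLs⟩ := hs
    have hB01 := segB01 Q b n s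
    have hBq : segB Q b n s = 1 → 1 ≤ cntF b (segL Q b s) (segR Q b n s) := segB_le_q hQ hQs
    rw [hLs] at hBq
    omega
  have hkey : ∑ s ∈ S, (cntF b s (segR Q b n s) + segA Q b s - segB Q b n s)
      + ∑ s ∈ S, segB Q b n s
      = ∑ s ∈ S, cntF b s (segR Q b n s) + ∑ s ∈ S, segA Q b s := by
    rw [← Finset.sum_add_distrib, ← Finset.sum_add_distrib]
    apply Finset.sum_congr rfl
    intro s hs
    have := hBle s hs
    omega
  have hAB := sum_segA_eq_sum_segB (b := b) hQ
  rw [← hS] at hAB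
  omega

end BK

section Words

def posRank (w : List ℤ) (x : ℤ) : ℤ :=
  if 0 < x then ((w.toFinset.filter fun y => 0 < y ∧ y ≤ x).card : ℤ) else x

lemma posReduce_def (w : List ℤ) : posReduce w = w.map (posRank w) := rfl

lemma posRank_pos_card {w : List ℤ} {x : ℤ} (hx : x ∈ w) (h0 : 0 < x) :
    1 ≤ (w.toFinset.filter fun y => 0 < y ∧ y ≤ x).card := by
  rw [Nat.one_le_iff_ne_zero, ← Nat.pos_iff_ne_zero, Finset.card_pos]
  exact ⟨x, by simp [List.mem_toFinset, hx, h0]⟩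

lemma posRank_lt_iff (w : List ℤ) {x y : ℤ} (hx : x ∈ w) (hy : y ∈ w) :
    posRank w x < posRank w y ↔ x < y := by
  unfold posRank
  by_cases h0x : 0 < x <;> by_cases h0y : 0 < y
  · rw [if_pos h0x, if_pos h0y]
    constructor
    · intro hlt
      by_contra hyx
      push_neg at hyx
      have hsub : (w.toFinset.filter fun z => 0 < z ∧ z ≤ y).card ≤
          (w.toFinset.filter fun z => 0 < z ∧ z ≤ x).card :=
        Finset.card_le_card
          (Finset.monotone_filter_right _ (fun z _ hz => ⟨hz.1, hz.2.trans hyx⟩))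
      omega
    · intro hxy
      have hsub : (w.toFinset.filter fun z => 0 < z ∧ z ≤ x) ⊆
          (w.toFinset.filter fun z => 0 < z ∧ z ≤ y) :=
        Finset.monotone_filter_right _ (fun z _ hz => ⟨hz.1, hz.2.trans hxy.le⟩)
      have hss : (w.toFinset.filter fun z => 0 < z ∧ z ≤ x) ⊂
          (w.toFinset.filter fun z => 0 < z ∧ z ≤ y) := by
        rw [Finset.ssubset_iff_of_subset hsub]
        refine ⟨y, by simp [List.mem_toFinset, hy, h0y], ?_⟩
        simp only [Finset.mem_filter, List.mem_toFinset, not_and]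
        intro _ _
        omega
      exact_mod_cast Finset.card_lt_card hss
  · rw [if_pos h0x, if_neg h0y]
    have h1 := posRank_pos_card hx h0x
    constructor
    · intro h; exfalso; omega
    · intro h; exfalso; omega
  · rw [if_neg h0x, if_pos h0y]
    have h1 := posRank_pos_card hy h0y
    constructor
    · intro _; omega
    · intro _; omega
  · rw [if_neg h0x, if_neg h0y]

lemma posRank_pos_iff {w : List ℤ} {x : ℤ} (hx : x ∈ w) : 0 < posRank w x ↔ 0 < x := by
  unfold posRank
  by_cases h0 : 0 < x
  · rw [if_pos h0]
    have := posRank_pos_card hx h0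
    constructor
    · intro _; exact h0
    · intro _; omega
  · rw [if_neg h0]

lemma getD_map_posRank (w : List ℤ) {j : ℕ} (h : j < w.length) :
    (w.map (posRank w)).getD j 0 = posRank w (w.getD j 0) := by
  rw [List.getD_eq_getElem _ _ (by simpa using h), List.getD_eq_getElem _ _ h,
    List.getElem_map]

lemma getD_mem {w : List ℤ} {j : ℕ} (h : j < w.length) : w.getD j 0 ∈ w := by
  rw [List.getD_eq_getElem _ _ h]
  exact List.getElem_mem _

lemma getD_finRange_map {n : ℕ} (g : Fin n → ℤ) {j : ℕ} (h : j < n) :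
    ((List.finRange n).map g).getD j 0 = g ⟨j, h⟩ := by
  rw [List.getD_eq_getElem _ _ (by simpa using h), List.getElem_map]
  congr 1
  rw [List.getElem_finRange]
  exact Fin.ext rfl

lemma desSet_map_congr {n : ℕ} (g g' : Fin n → ℤ)
    (h : ∀ j : ℕ, (hj : j + 1 < n) →
      (g' ⟨j+1, hj⟩ < g' ⟨j, by omega⟩ ↔ g ⟨j+1, hj⟩ < g ⟨j, by omega⟩)) :
    desSet ((List.finRange n).map g') = desSet ((List.finRange n).map g) := by
  unfold desSet
  rw [List.length_map, List.length_map, List.length_finRange]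
  ext i
  simp only [Finset.mem_filter, Finset.mem_range]
  constructor <;> rintro ⟨h1, h2, h3⟩ <;> refine ⟨h1, h2, ?_⟩
  · rw [getD_finRange_map g' h1, getD_finRange_map g' (show i - 1 < n by omega)] at h3
    rw [getD_finRange_map g h1, getD_finRange_map g (show i - 1 < n by omega)]
    have hj : (i - 1) + 1 < n := by omega
    have e1 : (⟨i, h1⟩ : Fin n) = ⟨(i-1)+1, hj⟩ := Fin.ext (show i = (i-1)+1 by omega)
    rw [e1] at h3 ⊢
    exact (h (i-1) hj).mp h3
  · rw [getD_finRange_map g h1, getD_finRange_map g (show i - 1 < n by omega)] at h3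
    rw [getD_finRange_map g' h1, getD_finRange_map g' (show i - 1 < n by omega)]
    have hj : (i - 1) + 1 < n := by omega
    have e1 : (⟨i, h1⟩ : Fin n) = ⟨(i-1)+1, hj⟩ := Fin.ext (show i = (i-1)+1 by omega)
    rw [e1] at h3 ⊢
    exact (h (i-1) hj).mpr h3

lemma posPart_congr {n : ℕ} (g g' : Fin n → ℤ)
    (hpos : ∀ i, 0 < g i ↔ 0 < g' i) (heq : ∀ i, 0 < g i → g i = g' i) :
    posPart (posReduce ((List.finRange n).map g)) =
    posPart (posReduce ((List.finRange n).map g')) := by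
  have hmemg : ∀ i : Fin n, g i ∈ (List.finRange n).map g := by
    intro i; exact List.mem_map_of_mem (List.mem_finRange i)
  have hmemg' : ∀ i : Fin n, g' i ∈ (List.finRange n).map g' := by
    intro i; exact List.mem_map_of_mem (List.mem_finRange i)
  unfold posPart
  rw [posReduce_def, posReduce_def, List.map_map, List.map_map,
    List.filter_map, List.filter_map]
  simp only [Function.comp_def]
  have hf1 : (List.finRange n).filter
      (fun i => decide (0 < posRank ((List.finRange n).map g) (g i))) =
      (List.finRange n).filter (fun i => decide (0 < g i)) := by
    apply List.filter_congr
    intro i _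
    simp only [decide_eq_decide]
    exact posRank_pos_iff (hmemg i)
  have hf2 : (List.finRange n).filter
      (fun i => decide (0 < posRank ((List.finRange n).map g') (g' i))) =
      (List.finRange n).filter (fun i => decide (0 < g' i)) := by
    apply List.filter_congr
    intro i _
    simp only [decide_eq_decide]
    exact posRank_pos_iff (hmemg' i)
  have hf3 : (List.finRange n).filter (fun i => decide (0 < g i)) =
      (List.finRange n).filter (fun i => decide (0 < g' i)) := by
    apply List.filter_congr
    intro i _
    simp only [decide_eq_decide]
    exact hpos i
  have hsets : ∀ z : ℤ, 0 < z →
      (((List.finRange n).map g).toFinset.filter fun y => 0 < y ∧ y ≤ z) =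
      (((List.finRange n).map g').toFinset.filter fun y => 0 < y ∧ y ≤ z) := by
    intro z _
    ext y
    simp only [Finset.mem_filter, List.mem_toFinset, List.mem_map]
    constructor
    · rintro ⟨⟨i, _, rfl⟩, hy⟩
      exact ⟨⟨i, List.mem_finRange i, (heq i hy.1).symm⟩, hy⟩
    · rintro ⟨⟨i, _, rfl⟩, hy⟩
      refine ⟨⟨i, List.mem_finRange i, ?_⟩, hy⟩
      exact heq i ((hpos i).mpr hy.1)
  rw [hf1, hf2, hf3]
  apply List.map_congr_left
  intro i hi
  simp only [List.mem_filter, decide_eq_true_eq] at hi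
  have h0' : 0 < g' i := hi.2
  have h0 : 0 < g i := (hpos i).mpr h0'
  have hgg : g i = g' i := heq i h0
  rw [← hgg]
  unfold posRank
  rw [if_pos h0, if_pos h0, hsets (g i) h0]

end Words

section Arr

variable {n k : ℕ}

def Qarr (a : Arrangement n k) (c : ℕ) : ℕ → Bool := fun i =>
  if h : i < n then
    decide (a.1.1 ⟨i, h⟩ = ⟨i, h⟩ ∧ ((a.1.2 ⟨i, h⟩ : ℕ) = c ∨ (a.1.2 ⟨i, h⟩ : ℕ) = c + 1))
  else false

def barr (a : Arrangement n k) (c : ℕ) : ℕ → Bool := fun i =>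
  if h : i < n then decide ((a.1.2 ⟨i, h⟩ : ℕ) = c + 1) else false

lemma Qarr_lt (a : Arrangement n k) (c : ℕ) : ∀ i, Qarr a c i = true → i < n := by
  intro i h
  unfold Qarr at h
  by_cases hn : i < n
  · exact hn
  · rw [dif_neg hn] at h; cases h

lemma Qarr_iff (a : Arrangement n k) (c : ℕ) (i : Fin n) :
    Qarr a c (i : ℕ) = true ↔
      (a.1.1 i = i ∧ ((a.1.2 i : ℕ) = c ∨ (a.1.2 i : ℕ) = c + 1)) := by
  unfold Qarr
  rw [dif_pos i.isLt]
  simp [Fin.eta]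

lemma barr_iff (a : Arrangement n k) (c : ℕ) (i : Fin n) :
    barr a c (i : ℕ) = true ↔ (a.1.2 i : ℕ) = c + 1 := by
  unfold barr
  rw [dif_pos i.isLt]
  simp [Fin.eta]

def BKarr (c : ℕ) (hc : c + 3 ≤ k) (a : Arrangement n k) : Arrangement n k :=
  ⟨(a.1.1, fun i =>
      if Qarr a c (i : ℕ) = true then
        (if BKfun (Qarr a c) (barr a c) n (i : ℕ) = true then (⟨c + 1, by omega⟩ : Fin k)
         else ⟨c, by omega⟩)
      else a.1.2 i), by
    intro j hj
    have hQ : ¬ Qarr a c (j : ℕ) = true := fun h => hj ((Qarr_iff a c j).mp h).1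
    simp only
    rw [if_neg hQ]
    exact a.2 j hj⟩

lemma BKarr_fst (c : ℕ) (hc : c + 3 ≤ k) (a : Arrangement n k) :
    (BKarr c hc a).1.1 = a.1.1 := rfl

lemma BKarr_snd_of_Q {a : Arrangement n k} {c : ℕ} (hc : c + 3 ≤ k) {i : Fin n}
    (h : Qarr a c (i : ℕ) = true) :
    ((BKarr c hc a).1.2 i : ℕ) =
      if BKfun (Qarr a c) (barr a c) n (i : ℕ) = true then c + 1 else c := by
  simp only [BKarr]
  rw [if_pos h]
  by_cases hB : BKfun (Qarr a c) (barr a c) n (i : ℕ) = true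
  · rw [if_pos hB, if_pos hB]
  · rw [if_neg hB, if_neg hB]

lemma BKarr_snd_of_not_Q {a : Arrangement n k} {c : ℕ} (hc : c + 3 ≤ k) {i : Fin n}
    (h : ¬ Qarr a c (i : ℕ) = true) :
    (BKarr c hc a).1.2 i = a.1.2 i := by
  simp only [BKarr]
  rw [if_neg h]

lemma Qarr_BKarr (c : ℕ) (hc : c + 3 ≤ k) (a : Arrangement n k) :
    Qarr (BKarr c hc a) c = Qarr a c := by
  funext i
  by_cases hn : i < n
  · have hcoe : ((⟨i, hn⟩ : Fin n) : ℕ) = i := rfl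
    by_cases hQ : Qarr a c i = true
    · rw [hQ]
      rw [← hcoe] at hQ ⊢
      rw [Qarr_iff]
      have hfix : a.1.1 ⟨i, hn⟩ = ⟨i, hn⟩ := ((Qarr_iff a c ⟨i, hn⟩).mp hQ).1
      refine ⟨hfix, ?_⟩
      rw [BKarr_snd_of_Q hc hQ]
      by_cases hB : BKfun (Qarr a c) (barr a c) n ((⟨i, hn⟩ : Fin n) : ℕ) = true
      · rw [if_pos hB]; exact Or.inr rfl
      · rw [if_neg hB]; exact Or.inl rfl
    · have h1 : ¬ Qarr (BKarr c hc a) c i = true := by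
        intro hcon
        apply hQ
        rw [← hcoe] at hcon ⊢
        rw [Qarr_iff] at hcon
        rw [Qarr_iff]
        rw [BKarr_snd_of_not_Q hc (by rw [hcoe]; exact hQ)] at hcon
        exact hcon
      rw [Bool.not_eq_true] at hQ h1
      rw [h1, hQ]
  · unfold Qarr
    rw [dif_neg hn, dif_neg hn]

lemma barr_BKarr (c : ℕ) (hc : c + 3 ≤ k) (a : Arrangement n k) :
    barr (BKarr c hc a) c = BKfun (Qarr a c) (barr a c) n := by
  funext i
  by_cases hn : i < n
  · have hcoe : ((⟨i, hn⟩ : Fin n) : ℕ) = i := rfl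
    have hL : barr (BKarr c hc a) c i = decide (((BKarr c hc a).1.2 ⟨i, hn⟩ : ℕ) = c + 1) := by
      unfold barr; rw [dif_pos hn]
    by_cases hQ : Qarr a c i = true
    · have hv := BKarr_snd_of_Q hc (i := ⟨i, hn⟩) (by rw [hcoe]; exact hQ)
      rw [hcoe] at hv
      rw [hL]
      by_cases hB : BKfun (Qarr a c) (barr a c) n i = true
      · rw [if_pos hB] at hv
        rw [hv, hB]
        simp
      · rw [Bool.not_eq_true] at hB
        rw [if_neg (by rw [hB]; simp)] at hv
        rw [hv, hB]
        simp
    · have hQf : Qarr a c i = false := by rwa [Bool.not_eq_true] at hQ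
      rw [BKfun_of_not_Q hQf]
      have hR : barr a c i = decide (((a.1.2 ⟨i, hn⟩ : ℕ)) = c + 1) := by
        unfold barr; rw [dif_pos hn]
      rw [hL, hR, BKarr_snd_of_not_Q hc (by rw [hcoe]; exact hQ)]
  · have hQn : Qarr a c i = false := by unfold Qarr; rw [dif_neg hn]
    rw [BKfun_of_not_Q hQn]
    unfold barr
    rw [dif_neg hn, dif_neg hn]

lemma BKarr_invol (c : ℕ) (hc : c + 3 ≤ k) (a : Arrangement n k) :
    BKarr c hc (BKarr c hc a) = a := by
  apply Subtype.ext
  apply Prod.ext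
  · rfl
  · funext i
    have h1 : (BKarr c hc (BKarr c hc a)).1.2 i =
        (if Qarr (BKarr c hc a) c (i : ℕ) = true then
          (if BKfun (Qarr (BKarr c hc a) c) (barr (BKarr c hc a) c) n (i : ℕ) = true
            then (⟨c + 1, by omega⟩ : Fin k) else ⟨c, by omega⟩)
         else (BKarr c hc a).1.2 i) := rfl
    rw [h1, Qarr_BKarr, barr_BKarr]
    by_cases hQ : Qarr a c (i : ℕ) = true
    · rw [if_pos hQ, BKfun_invol (Qarr_lt a c) (i : ℕ)]
      rcases ((Qarr_iff a c i).mp hQ).2 with hcv | hcv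
      · rw [if_neg (by rw [barr_iff]; omega)]
        exact Fin.ext hcv.symm
      · rw [if_pos ((barr_iff a c i).mpr hcv)]
        exact Fin.ext hcv.symm
    · rw [if_neg hQ]
      exact BKarr_snd_of_not_Q hc hQ

end Arr


section FixCount

variable {n k : ℕ}

lemma fixCount_filter (a : Arrangement n k) (c' : Fin k) :
    fixCount a c' = ((Finset.univ : Finset (Fin n)).filter
      (fun i => a.1.1 i = i ∧ a.1.2 i = c')).card := by
  rw [fixCount, Nat.card_eq_fintype_card, Fintype.card_subtype]

lemma card_fin_nat (P : ℕ → Prop) [DecidablePred P] :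
    ((Finset.univ : Finset (Fin n)).filter (fun (i : Fin n) => P (i : ℕ))).card =
      ((Finset.range n).filter P).card := by
  apply Finset.card_bij (fun (i : Fin n) _ => (i : ℕ))
  · intro i hi
    simp only [Finset.mem_filter, Finset.mem_univ, true_and] at hi
    simp only [Finset.mem_filter, Finset.mem_range]
    exact ⟨i.isLt, hi⟩
  · intro i _ j _ hij
    exact Fin.ext hij
  · intro j hj
    simp only [Finset.mem_filter, Finset.mem_range] at hj
    refine ⟨⟨j, hj.1⟩, ?_, rfl⟩
    simp only [Finset.mem_filter, Finset.mem_univ, true_and]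
    exact hj.2

lemma fixCount_BKarr_cp1 (c : ℕ) (hc : c + 3 ≤ k) (a : Arrangement n k) :
    fixCount (BKarr c hc a) ⟨c + 1, by omega⟩ = fixCount a ⟨c, by omega⟩ := by
  rw [fixCount_filter, fixCount_filter]
  have e1 : ((Finset.univ : Finset (Fin n)).filter
      (fun i => (BKarr c hc a).1.1 i = i ∧ (BKarr c hc a).1.2 i = ⟨c + 1, by omega⟩)) =
      ((Finset.univ : Finset (Fin n)).filter
      (fun (i : Fin n) => Qarr a c (i : ℕ) = true ∧ BKfun (Qarr a c) (barr a c) n (i : ℕ) = true)) := by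
    apply Finset.filter_congr
    intro i _
    constructor
    · rintro ⟨h1, h2⟩
      have hfix : a.1.1 i = i := h1
      by_cases hQ : Qarr a c (i : ℕ) = true
      · refine ⟨hQ, ?_⟩
        have hv := BKarr_snd_of_Q hc hQ
        by_cases hB : BKfun (Qarr a c) (barr a c) n (i : ℕ) = true
        · exact hB
        · exfalso
          rw [if_neg hB, h2] at hv
          simp at hv
      · exfalso
        apply hQ
        rw [Qarr_iff]
        have hv := BKarr_snd_of_not_Q hc hQ
        rw [hv] at h2
        exact ⟨hfix, Or.inr (by rw [h2])⟩
    · rintro ⟨hQ, hB⟩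
      refine ⟨((Qarr_iff a c i).mp hQ).1, ?_⟩
      have hv := BKarr_snd_of_Q hc hQ
      rw [if_pos hB] at hv
      exact Fin.ext hv
  rw [e1, card_fin_nat (fun j => Qarr a c j = true ∧ BKfun (Qarr a c) (barr a c) n j = true),
    BK_count (Qarr_lt a c),
    ← card_fin_nat (fun j => Qarr a c j = true ∧ barr a c j = false)]
  congr 1
  apply Finset.filter_congr
  intro i _
  constructor
  · rintro ⟨hQ, hb⟩
    obtain ⟨hfix, hor⟩ := (Qarr_iff a c i).mp hQ
    refine ⟨hfix, Fin.ext ?_⟩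
    rcases hor with h | h
    · exact h
    · exfalso
      rw [Bool.eq_false_iff] at hb
      exact hb ((barr_iff a c i).mpr h)
  · rintro ⟨hfix, hval⟩
    have hv : (a.1.2 i : ℕ) = c := by rw [hval]
    refine ⟨(Qarr_iff a c i).mpr ⟨hfix, Or.inl hv⟩, ?_⟩
    rw [Bool.eq_false_iff]
    intro hb
    have := (barr_iff a c i).mp hb
    omega

lemma fixCount_BKarr_c (c : ℕ) (hc : c + 3 ≤ k) (a : Arrangement n k) :
    fixCount (BKarr c hc a) ⟨c, by omega⟩ = fixCount a ⟨c + 1, by omega⟩ := by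
  have h := fixCount_BKarr_cp1 c hc (BKarr c hc a)
  rw [BKarr_invol] at h
  exact h.symm

lemma fixCount_BKarr_other (c : ℕ) (hc : c + 3 ≤ k) (a : Arrangement n k) (c' : Fin k)
    (h1 : (c' : ℕ) ≠ c) (h2 : (c' : ℕ) ≠ c + 1) :
    fixCount (BKarr c hc a) c' = fixCount a c' := by
  rw [fixCount_filter, fixCount_filter]
  congr 1
  apply Finset.filter_congr
  intro i _
  by_cases hQ : Qarr a c (i : ℕ) = true
  · have hv := BKarr_snd_of_Q hc hQ
    constructor
    · rintro ⟨hf, hc2⟩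
      exfalso
      have hval := congrArg (Fin.val) hc2
      rw [hv] at hval
      split_ifs at hval <;> omega
    · rintro ⟨hf, hc2⟩
      exfalso
      have hval := congrArg (Fin.val) hc2
      rcases ((Qarr_iff a c i).mp hQ).2 with h | h <;> omega
  · rw [show ((BKarr c hc a).1.1 i = i ∧ (BKarr c hc a).1.2 i = c') ↔
        (a.1.1 i = i ∧ (BKarr c hc a).1.2 i = c') from Iff.rfl,
      BKarr_snd_of_not_Q hc hQ]

end FixCount
section Cmp

variable {n k : ℕ}

lemma cmp_congr {u u' : Fin n → ℤ} {Q bb bb' : ℕ → Bool} {c : ℕ}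
    (h1 : ∀ i : Fin n, ¬ Q (i : ℕ) = true → u' i = u i)
    (h2 : ∀ i : Fin n, Q (i : ℕ) = true → ∃ x x' : ℕ,
      (x = c ∨ x = c + 1) ∧ (x' = c ∨ x' = c + 1) ∧
      u i = -((x : ℤ) + 1) ∧ u' i = -((x' : ℤ) + 1) ∧
      (bb (i : ℕ) = true ↔ x = c + 1) ∧ (bb' (i : ℕ) = true ↔ x' = c + 1))
    (h3 : ∀ i : Fin n, ¬ Q (i : ℕ) = true → u i ≠ -((c : ℤ) + 1) ∧ u i ≠ -((c : ℤ) + 2))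
    (h4 : ∀ j, ascB Q bb' j = ascB Q bb j) :
    ∀ j : ℕ, (hj : j + 1 < n) →
      (u' ⟨j + 1, hj⟩ < u' ⟨j, by omega⟩ ↔ u ⟨j + 1, hj⟩ < u ⟨j, by omega⟩) := by
  intro j hj
  have hj0 : j < n := by omega
  by_cases hQ0 : Q j = true <;> by_cases hQ1 : Q (j + 1) = true
  · obtain ⟨x0, x0', hx0, hx0', hu0, hu0', hb0, hb0'⟩ :=
      h2 ⟨j, hj0⟩ (by exact hQ0)
    obtain ⟨x1, x1', hx1, hx1', hu1, hu1', hb1, hb1'⟩ :=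
      h2 ⟨j + 1, hj⟩ (by exact hQ1)
    have hasc := h4 j
    unfold ascB at hasc
    rw [hQ0, hQ1] at hasc
    simp only [Bool.true_and] at hasc
    have hasc' : ((!bb' j && bb' (j + 1)) = true) ↔ ((!bb j && bb (j + 1)) = true) := by
      rw [hasc]
    simp only [Bool.and_eq_true, Bool.not_eq_true'] at hasc'
    have e0 : bb j = false ↔ ¬ x0 = c + 1 := by
      rw [← hb0]; cases bb j <;> simp
    have e0' : bb' j = false ↔ ¬ x0' = c + 1 := by
      rw [← hb0']; cases bb' j <;> simp
    rw [e0, e0', hb1, hb1'] at hasc'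
    rw [hu0, hu0', hu1, hu1']
    omega
  · obtain ⟨x0, x0', hx0, hx0', hu0, hu0', _, _⟩ := h2 ⟨j, hj0⟩ (by exact hQ0)
    have hu1 := h1 ⟨j + 1, hj⟩ (by exact hQ1)
    have h31 := h3 ⟨j + 1, hj⟩ (by exact hQ1)
    rw [hu0, hu0', hu1]
    omega
  · obtain ⟨x1, x1', hx1, hx1', hu1, hu1', _, _⟩ := h2 ⟨j + 1, hj⟩ (by exact hQ1)
    have hu0 := h1 ⟨j, hj0⟩ (by exact hQ0)
    have h30 := h3 ⟨j, hj0⟩ (by exact hQ0)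
    rw [hu1, hu1', hu0]
    omega
  · rw [h1 ⟨j, hj0⟩ (by exact hQ0), h1 ⟨j + 1, hj⟩ (by exact hQ1)]

def gdf (a : Arrangement n k) : Fin n → ℤ := fun i =>
  if a.1.1 i = i then -(((a.1.2 i : ℕ) : ℤ) + 1) else ((a.1.1 i : ℕ) : ℤ) + 1

lemma dfWord_eq (a : Arrangement n k) :
    dfWord a = posReduce ((List.finRange n).map (gdf a)) := rfl

def gpf (a : Arrangement n k) : Fin n → ℤ := fun i =>
  if a.1.1 i = i ∧ (a.1.2 i : ℕ) + 1 ≠ k then -(((a.1.2 i : ℕ) : ℤ) + 1)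
  else ((a.1.1 i : ℕ) : ℤ) + 1

lemma pfWord_eq (a : Arrangement n k) :
    pfWord a = posReduce ((List.finRange n).map (gpf a)) := rfl

lemma bk_h2_df (c : ℕ) (hc : c + 3 ≤ k) (a : Arrangement n k) :
    ∀ i : Fin n, Qarr a c (i : ℕ) = true → ∃ x x' : ℕ,
      (x = c ∨ x = c + 1) ∧ (x' = c ∨ x' = c + 1) ∧
      gdf a i = -((x : ℤ) + 1) ∧ gdf (BKarr c hc a) i = -((x' : ℤ) + 1) ∧
      (barr a c (i : ℕ) = true ↔ x = c + 1) ∧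
      (BKfun (Qarr a c) (barr a c) n (i : ℕ) = true ↔ x' = c + 1) := by
  intro i hQ
  obtain ⟨hfix, hor⟩ := (Qarr_iff a c i).mp hQ
  have hfix' : (BKarr c hc a).1.1 i = i := hfix
  have hv := BKarr_snd_of_Q hc hQ
  refine ⟨(a.1.2 i : ℕ), ((BKarr c hc a).1.2 i : ℕ), hor, ?_, ?_, ?_, ?_, ?_⟩
  · rw [hv]
    split_ifs
    · exact Or.inr rfl
    · exact Or.inl rfl
  · unfold gdf
    rw [if_pos hfix]
  · unfold gdf
    rw [if_pos hfix']
  · exact barr_iff a c i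
  · rw [hv]
    by_cases hB : BKfun (Qarr a c) (barr a c) n (i : ℕ) = true
    · rw [if_pos hB]
      simp [hB]
    · rw [if_neg hB]
      simp only [Bool.not_eq_true] at hB
      rw [hB]
      constructor
      · intro h; cases h
      · intro h; omega
  
lemma bk_h1_df (c : ℕ) (hc : c + 3 ≤ k) (a : Arrangement n k) :
    ∀ i : Fin n, ¬ Qarr a c (i : ℕ) = true → gdf (BKarr c hc a) i = gdf a i := by
  intro i hQ
  unfold gdf
  rw [BKarr_snd_of_not_Q hc hQ]
  rfl

lemma bk_h3_df (c : ℕ) (hc : c + 3 ≤ k) (a : Arrangement n k) :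
    ∀ i : Fin n, ¬ Qarr a c (i : ℕ) = true →
      gdf a i ≠ -((c : ℤ) + 1) ∧ gdf a i ≠ -((c : ℤ) + 2) := by
  intro i hQ
  unfold gdf
  by_cases hfix : a.1.1 i = i
  · rw [if_pos hfix]
    have hnor : ¬ ((a.1.2 i : ℕ) = c ∨ (a.1.2 i : ℕ) = c + 1) :=
      fun h => hQ ((Qarr_iff a c i).mpr ⟨hfix, h⟩)
    push_neg at hnor
    obtain ⟨hn1, hn2⟩ := hnor
    constructor <;> intro h <;> omega
  · rw [if_neg hfix]
    constructor <;> intro h <;> omega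

lemma DEZset_BKarr (c : ℕ) (hc : c + 3 ≤ k) (a : Arrangement n k) :
    DEZset (BKarr c hc a) = DEZset a := by
  unfold DEZset
  rw [dfWord_eq, dfWord_eq, desSet_posReduce, desSet_posReduce]
  exact desSet_map_congr (gdf a) (gdf (BKarr c hc a))
    (cmp_congr (bk_h1_df c hc a) (bk_h2_df c hc a) (bk_h3_df c hc a)
      (ascB_BKfun (Qarr_lt a c)))

lemma bk_h2_pf (c : ℕ) (hc : c + 3 ≤ k) (a : Arrangement n k) :
    ∀ i : Fin n, Qarr a c (i : ℕ) = true → ∃ x x' : ℕ,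
      (x = c ∨ x = c + 1) ∧ (x' = c ∨ x' = c + 1) ∧
      gpf a i = -((x : ℤ) + 1) ∧ gpf (BKarr c hc a) i = -((x' : ℤ) + 1) ∧
      (barr a c (i : ℕ) = true ↔ x = c + 1) ∧
      (BKfun (Qarr a c) (barr a c) n (i : ℕ) = true ↔ x' = c + 1) := by
  intro i hQ
  obtain ⟨hfix, hor⟩ := (Qarr_iff a c i).mp hQ
  have hfix' : (BKarr c hc a).1.1 i = i := hfix
  have hv := BKarr_snd_of_Q hc hQ
  have hne : (a.1.2 i : ℕ) + 1 ≠ k := by omega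
  have hne' : ((BKarr c hc a).1.2 i : ℕ) + 1 ≠ k := by
    rw [hv]; split_ifs <;> omega
  refine ⟨(a.1.2 i : ℕ), ((BKarr c hc a).1.2 i : ℕ), hor, ?_, ?_, ?_, ?_, ?_⟩
  · rw [hv]
    split_ifs
    · exact Or.inr rfl
    · exact Or.inl rfl
  · unfold gpf
    rw [if_pos ⟨hfix, hne⟩]
  · unfold gpf
    rw [if_pos ⟨hfix', hne'⟩]
  · exact barr_iff a c i
  · rw [hv]
    by_cases hB : BKfun (Qarr a c) (barr a c) n (i : ℕ) = true
    · rw [if_pos hB]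
      simp [hB]
    · rw [if_neg hB]
      simp only [Bool.not_eq_true] at hB
      rw [hB]
      constructor
      · intro h; cases h
      · intro h; omega

lemma bk_h1_pf (c : ℕ) (hc : c + 3 ≤ k) (a : Arrangement n k) :
    ∀ i : Fin n, ¬ Qarr a c (i : ℕ) = true → gpf (BKarr c hc a) i = gpf a i := by
  intro i hQ
  unfold gpf
  rw [BKarr_snd_of_not_Q hc hQ]
  rfl

lemma bk_h3_pf (c : ℕ) (hc : c + 3 ≤ k) (a : Arrangement n k) :
    ∀ i : Fin n, ¬ Qarr a c (i : ℕ) = true →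
      gpf a i ≠ -((c : ℤ) + 1) ∧ gpf a i ≠ -((c : ℤ) + 2) := by
  intro i hQ
  unfold gpf
  by_cases hcond : a.1.1 i = i ∧ (a.1.2 i : ℕ) + 1 ≠ k
  · rw [if_pos hcond]
    have hnor : ¬ ((a.1.2 i : ℕ) = c ∨ (a.1.2 i : ℕ) = c + 1) :=
      fun h => hQ ((Qarr_iff a c i).mpr ⟨hcond.1, h⟩)
    push_neg at hnor
    obtain ⟨hn1, hn2⟩ := hnor
    constructor <;> intro h <;> omega
  · rw [if_neg hcond]
    constructor <;> intro h <;> omega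

lemma DESset_BKarr (c : ℕ) (hc : c + 3 ≤ k) (a : Arrangement n k) :
    DESset (BKarr c hc a) = DESset a := by
  unfold DESset
  rw [pfWord_eq, pfWord_eq, desSet_posReduce, desSet_posReduce]
  exact desSet_map_congr (gpf a) (gpf (BKarr c hc a))
    (cmp_congr (bk_h1_pf c hc a) (bk_h2_pf c hc a) (bk_h3_pf c hc a)
      (ascB_BKfun (Qarr_lt a c)))

lemma Der_BKarr (c : ℕ) (hc : c + 3 ≤ k) (a : Arrangement n k) :
    Der (BKarr c hc a) = Der a := by
  unfold Der
  rw [dfWord_eq, dfWord_eq]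
  have hpos : ∀ i : Fin n, 0 < gdf a i ↔ 0 < gdf (BKarr c hc a) i := by
    intro i
    unfold gdf
    by_cases hfix : a.1.1 i = i
    · have hfix' : (BKarr c hc a).1.1 i = i := hfix
      rw [if_pos hfix, if_pos hfix']
      constructor <;> intro h <;> omega
    · have hfix' : ¬ (BKarr c hc a).1.1 i = i := hfix
      rw [if_neg hfix, if_neg hfix']
      exact Iff.rfl
  have heq : ∀ i : Fin n, 0 < gdf a i → gdf a i = gdf (BKarr c hc a) i := by
    intro i h
    unfold gdf at h ⊢
    by_cases hfix : a.1.1 i = i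
    · rw [if_pos hfix] at h
      omega
    · have hfix' : ¬ (BKarr c hc a).1.1 i = i := hfix
      rw [if_neg hfix, if_neg hfix']
      rfl
  exact (posPart_congr (gdf a) (gdf (BKarr c hc a)) hpos heq).symm

end Cmp
section Assembly

variable {n k : ℕ}

def mext (k : ℕ) (τ : Equiv.Perm (Fin (k - 1))) (m : Fin k → ℕ) : Fin k → ℕ := fun c =>
  if h : (c : ℕ) < k - 1 then
    m ⟨((τ ⟨(c : ℕ), h⟩ : Fin (k - 1)) : ℕ), (τ ⟨(c : ℕ), h⟩).isLt.trans_le (Nat.sub_le k 1)⟩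
  else m c

lemma mext_one (m : Fin k → ℕ) (c : Fin k) : mext k 1 m c = m c := by
  unfold mext
  split_ifs with h
  · exact congrArg m (Fin.ext (by simp))
  · rfl

lemma mext_mul (x y : Equiv.Perm (Fin (k - 1))) (m : Fin k → ℕ) (c : Fin k) :
    mext k (x * y) m c = mext k y (mext k x m) c := by
  by_cases h : (c : ℕ) < k - 1
  · have hy : ((⟨((y ⟨(c : ℕ), h⟩ : Fin (k - 1)) : ℕ),
        (y ⟨(c : ℕ), h⟩).isLt.trans_le (Nat.sub_le k 1)⟩ : Fin k) : ℕ) < k - 1 :=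
      (y ⟨(c : ℕ), h⟩).isLt
    simp only [mext]
    rw [dif_pos h, dif_pos h, dif_pos hy]
    apply congrArg m
    apply Fin.ext
    show ((x * y) ⟨(c : ℕ), h⟩ : ℕ) = _
    rw [Equiv.Perm.mul_apply]
  · simp only [mext, dif_neg h]

def transportEquiv {m₁ m₂ : Fin k → ℕ} (h : ∀ c', m₁ c' = m₂ c') :
    {a : Arrangement n k // ∀ c', fixCount a c' = m₁ c'} ≃
    {a : Arrangement n k // ∀ c', fixCount a c' = m₂ c'} :=
  Equiv.subtypeEquivRight (fun a =>
    ⟨fun hh c' => (hh c').trans (h c'), fun hh c' => (hh c').trans (h c').symm⟩)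

noncomputable def swapStep (c : ℕ) (hc : c + 3 ≤ k) (m : Fin k → ℕ) :
    {a : Arrangement n k // ∀ c', fixCount a c' = m c'} ≃
    {a : Arrangement n k // ∀ c', fixCount a c' =
      m (Equiv.swap (⟨c, by omega⟩ : Fin k) (⟨c + 1, by omega⟩ : Fin k) c')} where
  toFun a := ⟨BKarr c hc a.1, by
    intro c'
    rcases eq_or_ne (c' : ℕ) c with h1 | h1
    · rw [show c' = (⟨c, by omega⟩ : Fin k) from Fin.ext h1, Equiv.swap_apply_left,
        fixCount_BKarr_c c hc a.1, a.2]
    · rcases eq_or_ne (c' : ℕ) (c + 1) with h2 | h2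
      · rw [show c' = (⟨c + 1, by omega⟩ : Fin k) from Fin.ext h2, Equiv.swap_apply_right,
          fixCount_BKarr_cp1 c hc a.1, a.2]
      · rw [Equiv.swap_apply_of_ne_of_ne
            (fun h => h1 (congrArg Fin.val h)) (fun h => h2 (congrArg Fin.val h)),
          fixCount_BKarr_other c hc a.1 c' h1 h2, a.2]⟩
  invFun b := ⟨BKarr c hc b.1, by
    intro c'
    rcases eq_or_ne (c' : ℕ) c with h1 | h1
    · rw [show c' = (⟨c, by omega⟩ : Fin k) from Fin.ext h1, fixCount_BKarr_c c hc b.1,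
        b.2 ⟨c + 1, by omega⟩, Equiv.swap_apply_right]
    · rcases eq_or_ne (c' : ℕ) (c + 1) with h2 | h2
      · rw [show c' = (⟨c + 1, by omega⟩ : Fin k) from Fin.ext h2,
          fixCount_BKarr_cp1 c hc b.1, b.2 ⟨c, by omega⟩, Equiv.swap_apply_left]
      · rw [fixCount_BKarr_other c hc b.1 c' h1 h2, b.2 c',
          Equiv.swap_apply_of_ne_of_ne
            (fun h => h1 (congrArg Fin.val h)) (fun h => h2 (congrArg Fin.val h))]⟩
  left_inv a := Subtype.ext (BKarr_invol c hc a.1)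
  right_inv b := Subtype.ext (BKarr_invol c hc b.1)

lemma mext_swap (x y : Fin (k - 1)) (hxy : (y : ℕ) = (x : ℕ) + 1) (hx3 : (x : ℕ) + 3 ≤ k)
    (m : Fin k → ℕ) (c' : Fin k) :
    mext k (Equiv.swap x y) m c' =
      m (Equiv.swap (⟨(x : ℕ), by omega⟩ : Fin k) (⟨(x : ℕ) + 1, by omega⟩ : Fin k) c') := by
  have hxk : (x : ℕ) < k := by omega
  have hx1k : (x : ℕ) + 1 < k := by omega
  set A : Fin k := ⟨(x : ℕ), by omega⟩ with hA
  set B : Fin k := ⟨(x : ℕ) + 1, by omega⟩ with hB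
  unfold mext
  split_ifs with h
  · refine (congrArg m (Fin.ext ?_))
    show (Equiv.swap x y ⟨(c' : ℕ), h⟩ : ℕ) = ((Equiv.swap A B c' : Fin k) : ℕ)
    rcases eq_or_ne (c' : ℕ) (x : ℕ) with h1 | h1
    · have e1 : Equiv.swap x y ⟨(c' : ℕ), h⟩ = y := by
        rw [show (⟨(c' : ℕ), h⟩ : Fin (k - 1)) = x from Fin.ext h1]
        exact Equiv.swap_apply_left x y
      have e2 : ((Equiv.swap A B c' : Fin k) : ℕ) = ((Equiv.swap A B A : Fin k) : ℕ) :=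
        congrArg (fun t => ((Equiv.swap A B t : Fin k) : ℕ)) (Fin.ext h1)
      rw [e1, e2, Equiv.swap_apply_left]
      exact hxy
    · rcases eq_or_ne (c' : ℕ) ((x : ℕ) + 1) with h2 | h2
      · have e1 : Equiv.swap x y ⟨(c' : ℕ), h⟩ = x := by
          rw [show (⟨(c' : ℕ), h⟩ : Fin (k - 1)) = y from
            Fin.ext (show (c' : ℕ) = (y : ℕ) by omega)]
          exact Equiv.swap_apply_right x y
        have e2 : ((Equiv.swap A B c' : Fin k) : ℕ) = ((Equiv.swap A B B : Fin k) : ℕ) :=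
          congrArg (fun t => ((Equiv.swap A B t : Fin k) : ℕ)) (Fin.ext h2)
        rw [e1, e2, Equiv.swap_apply_right]
      · have hne1 : (⟨(c' : ℕ), h⟩ : Fin (k - 1)) ≠ x := fun hh => by
          have h' : (c' : ℕ) = (x : ℕ) := congrArg Fin.val hh
          omega
        have hne2 : (⟨(c' : ℕ), h⟩ : Fin (k - 1)) ≠ y := fun hh => by
          have h' : (c' : ℕ) = (y : ℕ) := congrArg Fin.val hh
          omega
        have hne1' : c' ≠ A := fun hh => by
          have h' : (c' : ℕ) = (x : ℕ) := congrArg Fin.val hh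
          omega
        have hne2' : c' ≠ B := fun hh => by
          have h' : (c' : ℕ) = (x : ℕ) + 1 := congrArg Fin.val hh
          omega
        rw [Equiv.swap_apply_of_ne_of_ne hne1 hne2,
          Equiv.swap_apply_of_ne_of_ne hne1' hne2']
  · have hne1' : c' ≠ A := fun hh => by
      have h' : (c' : ℕ) = (x : ℕ) := congrArg Fin.val hh
      omega
    have hne2' : c' ≠ B := fun hh => by
      have h' : (c' : ℕ) = (x : ℕ) + 1 := congrArg Fin.val hh
      omega
    rw [Equiv.swap_apply_of_ne_of_ne hne1' hne2']

lemma perm_mem_adj (M : ℕ) (τ : Equiv.Perm (Fin M)) :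
    τ ∈ Submonoid.closure
      {σ : Equiv.Perm (Fin M) | ∃ x y : Fin M, (y : ℕ) = (x : ℕ) + 1 ∧ σ = Equiv.swap x y} := by
  cases M with
  | zero =>
    have h : τ = 1 := Equiv.ext (fun i => i.elim0)
    rw [h]
    exact Submonoid.one_mem _
  | succ K =>
    have h := Equiv.Perm.mclosure_swap_castSucc_succ K
    have hτ : τ ∈ (⊤ : Submonoid (Equiv.Perm (Fin (K + 1)))) := trivial
    rw [← h] at hτ
    refine Submonoid.closure_mono ?_ hτ
    rintro σ ⟨i, rfl⟩
    exact ⟨i.castSucc, i.succ, by simp, rfl⟩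

end Assembly

theorem stmt7 (n k : ℕ) (hn : 1 ≤ n) (hk : 1 ≤ k) (m : Fin k → ℕ)
    (τ : Equiv.Perm (Fin (k - 1))) :
    ∃ Ψ : {a : Arrangement n k // ∀ c, fixCount a c = m c} ≃
          {b : Arrangement n k // ∀ c : Fin k, fixCount b c =
            if h : (c : ℕ) < k - 1 then
              m ⟨((τ ⟨(c : ℕ), h⟩ : Fin (k - 1)) : ℕ),
                 (τ ⟨(c : ℕ), h⟩).isLt.trans_le (Nat.sub_le k 1)⟩
            else m c},
      ∀ a, DESset a.1 = DESset (Ψ a).1 ∧ DEZset a.1 = DEZset (Ψ a).1 ∧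
        Der a.1 = Der (Ψ a).1 := by
  have main : ∀ τ' : Equiv.Perm (Fin (k - 1)), ∀ m' : Fin k → ℕ,
      ∃ Ψ : {a : Arrangement n k // ∀ c, fixCount a c = m' c} ≃
            {b : Arrangement n k // ∀ c, fixCount b c = mext k τ' m' c},
        ∀ a, DESset a.1 = DESset (Ψ a).1 ∧ DEZset a.1 = DEZset (Ψ a).1 ∧
          Der a.1 = Der (Ψ a).1 := by
    intro τ'
    have hmem := perm_mem_adj (k - 1) τ'
    induction hmem using Submonoid.closure_induction with
    | one =>
      intro m'
      exact ⟨transportEquiv (fun c' => (mext_one m' c').symm), fun a => ⟨rfl, rfl, rfl⟩⟩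
    | mem σ hσ =>
      intro m'
      obtain ⟨x, y, hxy, rfl⟩ := hσ
      have hx3 : (x : ℕ) + 3 ≤ k := by have := y.isLt; omega
      refine ⟨(swapStep (x : ℕ) hx3 m').trans
        (transportEquiv (fun c' => (mext_swap x y hxy hx3 m' c').symm)), ?_⟩
      intro a
      exact ⟨(DESset_BKarr _ hx3 a.1).symm, (DEZset_BKarr _ hx3 a.1).symm,
        (Der_BKarr _ hx3 a.1).symm⟩
    | mul σ₁ σ₂ h1 h2 ih1 ih2 =>
      intro m'
      obtain ⟨Ψ₁, hΨ₁⟩ := ih1 m'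
      obtain ⟨Ψ₂, hΨ₂⟩ := ih2 (mext k σ₁ m')
      refine ⟨(Ψ₁.trans Ψ₂).trans (transportEquiv (fun c' => (mext_mul σ₁ σ₂ m' c').symm)), ?_⟩
      intro a
      obtain ⟨d1, d2, d3⟩ := hΨ₁ a
      obtain ⟨e1, e2, e3⟩ := hΨ₂ (Ψ₁ a)
      exact ⟨d1.trans e1, d2.trans e2, d3.trans e3⟩
  obtain ⟨Ψ, hΨ⟩ := main τ m
  exact ⟨Ψ, hΨ⟩

end KArr
end

section
/- For every k-arrangement a ∈ A_n^k whose weak derangement part Der_k(a) is non-empty, the number of slots of type I equals the number of slots of type II: t_1(a) = t_2(a). -/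
open scoped Classical

namespace KArr

/-! ### Auxiliary lemmas for stmt8 -/

private lemma pcount_mono (w : List ℤ) (i : ℕ) :
    ((w.take i).filter fun x => decide (0 < x)).length ≤
    ((w.take (i+1)).filter fun x => decide (0 < x)).length := by
  apply List.Sublist.length_le
  apply List.Sublist.filter
  have h : w.take i = (w.take (i+1)).take i := by
    rw [List.take_take]; congr 1; omega
  rw [h]; exact List.take_sublist _ _

private lemma pcount_step (w : List ℤ) (i : ℕ) :
    ((w.take (i+1)).filter fun x => decide (0 < x)).length ≤
    ((w.take i).filter fun x => decide (0 < x)).length + 1 := by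
  rw [List.take_succ, List.filter_append, List.length_append]
  have h1 : ((w[i]?.toList).filter fun x => decide (0 < x)).length ≤ w[i]?.toList.length :=
    List.length_filter_le _ _
  have h2 : w[i]?.toList.length ≤ 1 := by cases w[i]? <;> simp
  omega

/-- Positive reduction preserves the property "positive letters are pairwise distinct". -/
private lemma posReduce_pairwise (L : List ℤ)
    (h : L.Pairwise fun x y => 0 < x → 0 < y → x ≠ y) :
    (posReduce L).Pairwise fun x y => 0 < x → 0 < y → x ≠ y := by
  rw [List.pairwise_iff_getElem] at h ⊢
  intro i j hi hj hij
  simp only [posReduce, List.length_map] at hi hj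
  simp only [posReduce, List.getElem_map]
  intro hx hy hxy
  have hxpos : 0 < L[i] := by
    by_contra hc
    rw [if_neg hc] at hx; exact hc hx
  have hypos : 0 < L[j] := by
    by_contra hc
    rw [if_neg hc] at hy; exact hc hy
  rw [if_pos hxpos, if_pos hypos] at hxy
  have hne : L[i] ≠ L[j] := h i j hi hj hij hxpos hypos
  have key : ∀ u v : ℤ, u ∈ L → v ∈ L → 0 < u → u < v →
      (L.toFinset.filter fun z => 0 < z ∧ z ≤ u).card <
      (L.toFinset.filter fun z => 0 < z ∧ z ≤ v).card := by
    intro u v hu hv hupos huv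
    have hsub : (L.toFinset.filter fun z => 0 < z ∧ z ≤ u) ⊆
        (L.toFinset.filter fun z => 0 < z ∧ z ≤ v) := by
      intro z hz
      simp only [Finset.mem_filter] at hz ⊢
      exact ⟨hz.1, hz.2.1, le_trans hz.2.2 huv.le⟩
    apply Finset.card_lt_card
    rw [Finset.ssubset_iff_of_subset hsub]
    refine ⟨v, ?_, ?_⟩
    · simp only [Finset.mem_filter, List.mem_toFinset]
      exact ⟨hv, hupos.trans huv, le_refl v⟩
    · intro hmem'
      have := (Finset.mem_filter.mp hmem').2.2
      omega
  rcases hne.lt_or_gt with h' | h'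
  · have := key L[i] L[j] (List.getElem_mem hi) (List.getElem_mem hj) hxpos h'
    omega
  · have := key L[j] L[i] (List.getElem_mem hj) (List.getElem_mem hi) hypos h'
    omega

/-- The positive letters of the weak derangement part are pairwise distinct. -/
private lemma wDer_pairwise {n k : ℕ} (a : Arrangement n k) :
    (wDer a).Pairwise fun x y => 0 < x → 0 < y → x ≠ y := by
  apply List.Pairwise.sublist List.filter_sublist
  show (dfWord a).Pairwise _
  unfold dfWord
  apply posReduce_pairwise
  rw [List.pairwise_map]
  refine List.Pairwise.imp ?_ (List.nodup_finRange n)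
  intro i j hne hx hy hxy
  by_cases h1 : a.1.1 i = i
  · rw [if_pos h1] at hx; omega
  by_cases h2 : a.1.1 j = j
  · rw [if_pos h2] at hy; omega
  rw [if_neg h1, if_neg h2] at hxy
  have : (a.1.1 i : ℕ) = (a.1.1 j : ℕ) := by omega
  exact hne (a.1.1.injective (Fin.val_injective this))

/-- Type I is equivalent to the `(E, N)` transition condition. -/
private lemma typeI_iff {w : List ℤ}
    (hw : w.Pairwise fun x y => 0 < x → 0 < y → x ≠ y)
    {i : ℕ} (him : i ≤ w.length) :
    typeI w i ↔ (slotE w i ∧ ¬ slotE w (i+1)) := by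
  constructor
  · rintro ⟨_, h2, h3⟩; exact ⟨h2, h3⟩
  rintro ⟨hE, hN⟩
  refine ⟨?_, hE, hN⟩
  rcases Nat.eq_zero_or_pos i with rfl | hi0
  · exact Or.inl rfl
  have him' : i < w.length := by
    rcases Nat.lt_or_ge i w.length with hlt | hge
    · exact hlt
    · exact absurd (Or.inr (Or.inl (by omega))) hN
  have hex : isExcAt w (i-1) := by
    rcases hE with hh | hh | hh
    · exact absurd hh (by omega)
    · exact absurd hh (by omega)
    · exact hh
  have hnex : ¬ isExcAt w i := fun hx => hN (Or.inr (Or.inr hx))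
  refine Or.inr ⟨him', ?_⟩
  have e1 : (((w.take ((i-1)+1)).filter fun x => decide (0 < x)).length : ℤ) <
      w.getD (i-1) 0 := hex
  rw [show (i-1)+1 = i by omega] at e1
  have e2 : ¬ ((((w.take (i+1)).filter fun x => decide (0 < x)).length : ℤ) <
      w.getD i 0) := hnex
  push_neg at e2
  have step := pcount_step w i
  by_cases hp : 0 < w.getD i 0
  · have hp' : 0 < w.getD (i-1) 0 := by omega
    have g1 : w.getD (i-1) 0 = w[i-1]'(by omega) := List.getD_eq_getElem w 0 (by omega)
    have g2 : w.getD i 0 = w[i]'him' := List.getD_eq_getElem w 0 him'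
    have hne := List.pairwise_iff_getElem.mp hw (i-1) i (by omega) him' (by omega)
      (g1 ▸ hp') (g2 ▸ hp)
    rw [g1] at e1
    rw [g2] at e2
    rw [g1, g2]
    omega
  · omega

/-- Type II is equivalent to the `(N, E)` transition condition. -/
private lemma typeII_iff {w : List ℤ} {i : ℕ} (him : i ≤ w.length) :
    typeII w i ↔ (¬ slotE w i ∧ slotE w (i+1)) := by
  constructor
  · rintro ⟨_, h2, h3⟩; exact ⟨h2, h3⟩
  rintro ⟨hN, hE⟩
  refine ⟨?_, hN, hE⟩
  rintro (rfl | ⟨hlt, hdes⟩)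
  · exact hN (Or.inl rfl)
  have hi0 : i ≠ 0 := fun h => hN (Or.inl h)
  have hex : isExcAt w i := by
    rcases hE with hh | hh | hh
    · exact absurd hh (by omega)
    · exact absurd hh (by omega)
    · exact hh
  have hnex : ¬ isExcAt w (i-1) := fun h => hN (Or.inr (Or.inr h))
  have e1 : (((w.take (i+1)).filter fun x => decide (0 < x)).length : ℤ) <
      w.getD i 0 := hex
  have e2 : ¬ ((((w.take ((i-1)+1)).filter fun x => decide (0 < x)).length : ℤ) <
      w.getD (i-1) 0) := hnex
  rw [show (i-1)+1 = i by omega] at e2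
  push_neg at e2
  have mono := pcount_mono w i
  omega

/-- Since the boundary values agree, the number of `(true, false)` transitions equals
the number of `(false, true)` transitions. -/
private lemma count_transitions (b : ℕ → Prop) (m : ℕ) (h0 : b 0) (h1 : b (m+1)) :
    ((Finset.range (m+1)).filter fun i => b i ∧ ¬ b (i+1)).card
      = ((Finset.range (m+1)).filter fun i => ¬ b i ∧ b (i+1)).card := by
  classical
  have key : ∀ i : ℕ, ((if b i then (1:ℤ) else 0) - (if b (i+1) then 1 else 0))
      = (if b i ∧ ¬ b (i+1) then (1:ℤ) else 0) - (if ¬ b i ∧ b (i+1) then 1 else 0) := by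
    intro i
    by_cases hi : b i <;> by_cases hj : b (i+1) <;> simp [hi, hj]
  have tel : ∑ i ∈ Finset.range (m+1),
      ((if b i then (1:ℤ) else 0) - (if b (i+1) then 1 else 0))
      = (if b 0 then (1:ℤ) else 0) - (if b (m+1) then 1 else 0) :=
    Finset.sum_range_sub' _ _
  rw [Finset.sum_congr rfl (fun i _ => key i), Finset.sum_sub_distrib,
    Finset.sum_boole, Finset.sum_boole, if_pos h0, if_pos h1, sub_self] at tel
  omega

theorem stmt8 (n k : ℕ) (a : Arrangement n k) (h : wDer a ≠ []) :
    Nat.card {i : Fin ((wDer a).length + 1) // typeI (wDer a) (i : ℕ)} =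
    Nat.card {i : Fin ((wDer a).length + 1) // typeII (wDer a) (i : ℕ)} := by
  classical
  set w := wDer a with hw
  have hpw : w.Pairwise fun x y => 0 < x → 0 < y → x ≠ y := wDer_pairwise a
  have hcard : ∀ P : ℕ → Prop, Nat.card {i : Fin (w.length + 1) // P (i : ℕ)} =
      ((Finset.range (w.length + 1)).filter P).card := by
    intro P
    rw [Nat.card_eq_fintype_card, Fintype.card_subtype]
    refine Finset.card_bij (fun i _ => (i : ℕ)) ?_ ?_ ?_
    · intro i hi
      simp only [Finset.mem_filter, Finset.mem_univ, true_and] at hi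
      simp only [Finset.mem_filter, Finset.mem_range]
      exact ⟨i.isLt, hi⟩
    · intro i _ j _ hij
      exact Fin.val_injective hij
    · intro b hb
      simp only [Finset.mem_filter, Finset.mem_range] at hb
      exact ⟨⟨b, hb.1⟩, by simp [hb.2], rfl⟩
  rw [hcard, hcard]
  have h1 : (Finset.range (w.length + 1)).filter (typeI w) =
      (Finset.range (w.length + 1)).filter fun i => slotE w i ∧ ¬ slotE w (i+1) := by
    apply Finset.filter_congr
    intro i hi
    simp only [Finset.mem_range] at hi
    exact typeI_iff hpw (by omega)
  have h2 : (Finset.range (w.length + 1)).filter (typeII w) =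
      (Finset.range (w.length + 1)).filter fun i => ¬ slotE w i ∧ slotE w (i+1) := by
    apply Finset.filter_congr
    intro i hi
    simp only [Finset.mem_range] at hi
    exact typeII_iff (by omega)
  rw [h1, h2]
  exact count_transitions (slotE w) w.length (Or.inl rfl) (Or.inr (Or.inl rfl))

end KArr
end
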